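/- arXiv:1411.0155 — 3 statements merged into one kernel-verified Lean document; each statement's English description precedes it below -/
import Mathlib

section
/- Suppose F(·,x,a) has bounded variation along x̄ uniformly over A, let δ̄>0 satisfy η^δ̄(T) < ∞, assume (C1) and (C2), and take any δ ∈ (0,δ̄). Then for every s̄ ∈ [S,T), lim_{s↓s̄} sup{ d_H(F(s̄⁺,x,a), F(s,x,a)) : x ∈ x̄(s̄)+δ𝔹, a ∈ A } = 0, and for every t̄ ∈ (S,T], lim_{t↑t̄} sup{ d_H(F(t̄⁻,x,a), F(t,x,a)) : x ∈ x̄(t̄)+δ𝔹, a ∈ A } = 0, where F(s̄⁺,x,a) and F(t̄⁻,x,a) denote the set-valued right and left limits of F(·,x,a) at s̄ and t̄ respectively. -/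
open Set Metric Filter MeasureTheory Pointwise
open scoped ENNReal Topology

noncomputable section

/-- Euclidean `n`-space `ℝⁿ`. -/
abbrev En (n : ℕ) : Type := EuclideanSpace ℝ (Fin n)

/-- A partition `{t₀ = S, t₁, …, t_N = t}` of the interval `[S, t]`. -/
structure IvlPartition (S t : ℝ) where
  N : ℕ
  pts : ℕ → ℝ
  hN : 0 < N
  first : pts 0 = S
  last : pts N = t
  mono : ∀ i, i < N → pts i < pts (i + 1)

/-- `diam(𝒯) ≤ ε` : every subinterval of the partition has length at most `ε`. -/
def IvlPartition.diamLE {S t : ℝ} (P : IvlPartition S t) (ε : ℝ) : Prop :=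
  ∀ i, i < P.N → P.pts (i + 1) - P.pts i ≤ ε

/-- The sum `I^δ(𝒯) = Σᵢ sup { d_H(F(tᵢ₊₁,x,a), F(tᵢ,x,a)) :
x ∈ x̄([tᵢ,tᵢ₊₁]) + δ𝔹, a ∈ A }` for a multifunction `F` along `x̄`, uniformly over `A`. -/
noncomputable def mvSum {n k : ℕ} (F : ℝ → En n → En k → Set (En n))
    (xbar : ℝ → En n) (A : Set (En k)) (δ : ℝ) {S t : ℝ} (P : IvlPartition S t) : ℝ≥0∞ :=
  ∑ i ∈ Finset.range P.N,
    ⨆ x ∈ xbar '' Set.Icc (P.pts i) (P.pts (i + 1)) + Metric.closedBall (0 : En n) δ,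
      ⨆ a ∈ A, EMetric.hausdorffEdist (F (P.pts (i + 1)) x a) (F (P.pts i) x a)

/-- The `(δ,ε)`-perturbed cumulative variation function `η^δ_ε(t)`:
the supremum of `I^δ(𝒯)` over partitions `𝒯` of `[S,t]` with `diam(𝒯) ≤ ε`.
(For `t = S` there are no partitions and the value is `0`.) -/
noncomputable def mvEtaEps {n k : ℕ} (F : ℝ → En n → En k → Set (En n))
    (xbar : ℝ → En n) (A : Set (En k)) (δ ε : ℝ) (S t : ℝ) : ℝ≥0∞ :=
  ⨆ (P : IvlPartition S t) (_ : P.diamLE ε), mvSum F xbar A δ P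

/-- The `δ`-perturbed cumulative variation function `η^δ(t) = lim_{ε↓0} η^δ_ε(t)`
(the limit of the decreasing-in-`ε` family equals the infimum). -/
noncomputable def mvEtaDelta {n k : ℕ} (F : ℝ → En n → En k → Set (En n))
    (xbar : ℝ → En n) (A : Set (En k)) (δ : ℝ) (S t : ℝ) : ℝ≥0∞ :=
  ⨅ (ε : ℝ) (_ : 0 < ε), mvEtaEps F xbar A δ ε S t

/-- The cumulative variation function `η(t) = lim_{δ↓0} η^δ(t)`. -/
noncomputable def mvEta {n k : ℕ} (F : ℝ → En n → En k → Set (En n))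
    (xbar : ℝ → En n) (A : Set (En k)) (S t : ℝ) : ℝ≥0∞ :=
  ⨅ (δ : ℝ) (_ : 0 < δ), mvEtaDelta F xbar A δ S t

/-- `F(·,x,a)` has bounded variation along `x̄` uniformly over `A` : `η(T) < ∞`. -/
def HasBVAlongUniformly {n k : ℕ} (F : ℝ → En n → En k → Set (En n))
    (xbar : ℝ → En n) (A : Set (En k)) (S T : ℝ) : Prop :=
  mvEta F xbar A S T < ⊤

/-- Hypothesis (C1): nonempty closed values, measurability in `t` (Castaing-type
characterization via distance functions), and uniform boundedness near `x̄`. -/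
def HypC1 {n k : ℕ} (F : ℝ → En n → En k → Set (En n))
    (xbar : ℝ → En n) (A : Set (En k)) (S T δbar : ℝ) : Prop :=
  (∀ t ∈ Set.Icc S T, ∀ x : En n, ∀ a ∈ A, (F t x a).Nonempty ∧ IsClosed (F t x a)) ∧
  (∀ x : En n, ∀ a ∈ A, ∀ v : En n,
      Measurable fun t : ℝ => EMetric.infEdist v (F t x a)) ∧
  (∃ c : ℝ, 0 < c ∧ ∀ t ∈ Set.Icc S T, ∀ x ∈ Metric.closedBall (xbar t) δbar, ∀ a ∈ A,
      F t x a ⊆ Metric.closedBall (0 : En n) c)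

/-- Hypothesis (C2): uniform continuity of `(x,a) ↦ F(t,x,a)` near `x̄`,
with a modulus of continuity `γ`. -/
def HypC2 {n k : ℕ} (F : ℝ → En n → En k → Set (En n))
    (xbar : ℝ → En n) (A : Set (En k)) (S T δbar : ℝ) : Prop :=
  ∃ γ : ℝ → ℝ, (∀ s, 0 ≤ γ s) ∧ Tendsto γ (𝓝[>] (0 : ℝ)) (𝓝 0) ∧
    ∀ t ∈ Set.Icc S T, ∀ x ∈ Metric.closedBall (xbar t) δbar,
      ∀ x' ∈ Metric.closedBall (xbar t) δbar, ∀ a ∈ A, ∀ a' ∈ A,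
        F t x a ⊆ F t x' a' + Metric.closedBall (0 : En n) (γ (‖x - x'‖ + ‖a - a'‖))

/-- The Kuratowski upper limit of a family of sets along a filter `l`. -/
def kLimsup {α : Type*} [PseudoEMetricSpace α] (l : Filter ℝ) (G : ℝ → Set α) : Set α :=
  {v | ∀ ε : ℝ≥0∞, 0 < ε → ∃ᶠ s in l, EMetric.infEdist v (G s) < ε}

/-- The Kuratowski lower limit of a family of sets along a filter `l`. -/
def kLiminf {α : Type*} [PseudoEMetricSpace α] (l : Filter ℝ) (G : ℝ → Set α) : Set α :=
  {v | Tendsto (fun s => EMetric.infEdist v (G s)) l (𝓝 0)}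

/-- The set-valued limit along `l` exists: upper and lower Kuratowski limits coincide. -/
def KLimExists {α : Type*} [PseudoEMetricSpace α] (l : Filter ℝ) (G : ℝ → Set α) : Prop :=
  kLimsup l G = kLiminf l G

/-- The set-valued right limit `F(s̄⁺, x, a) = lim_{s ↓ s̄} F(s,x,a)` (with `s ∈ (s̄,T]`). -/
def rightLim {n k : ℕ} (F : ℝ → En n → En k → Set (En n)) (T sbar : ℝ)
    (x : En n) (a : En k) : Set (En n) :=
  kLiminf (𝓝[Set.Ioc sbar T] sbar) fun s => F s x a

/-- The set-valued left limit `F(t̄⁻, x, a) = lim_{t ↑ t̄} F(t,x,a)` (with `t ∈ [S,t̄)`). -/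
def leftLim {n k : ℕ} (F : ℝ → En n → En k → Set (En n)) (S tbar : ℝ)
    (x : En n) (a : En k) : Set (En n) :=
  kLiminf (𝓝[Set.Ico S tbar] tbar) fun s => F s x a

section Aux

open EMetric

/-- Dependent choice helper. -/
lemma dchoice {α : Type*} (P : ℕ → α → Prop) (R : ℕ → α → α → Prop)
    (a0 : α) (h0 : P 0 a0)
    (hstep : ∀ m a, P m a → ∃ b, P (m + 1) b ∧ R m a b) :
    ∃ g : ℕ → α, g 0 = a0 ∧ (∀ m, P m (g m)) ∧ ∀ m, R m (g m) (g (m + 1)) := by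
  choose f hf1 hf2 using hstep
  let g : ∀ m : ℕ, {a : α // P m a} := fun m =>
    Nat.rec ⟨a0, h0⟩ (fun m' p => ⟨f m' p.1 p.2, hf1 m' p.1 p.2⟩) m
  exact ⟨fun m => (g m).1, rfl, fun m => (g m).2, fun m => hf2 m (g m).1 (g m).2⟩

/-- Concatenation of partitions. -/
def IvlPartition.glue {S b T : ℝ} (P : IvlPartition S b) (Q : IvlPartition b T) : IvlPartition S T where
  N := P.N + Q.N
  pts i := if i ≤ P.N then P.pts i else Q.pts (i - P.N)
  hN := Nat.add_pos_left P.hN _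
  first := by simp [P.first]
  last := by
    have h1 : ¬ (P.N + Q.N ≤ P.N) := by have := Q.hN; omega
    show (if P.N + Q.N ≤ P.N then P.pts (P.N + Q.N) else Q.pts (P.N + Q.N - P.N)) = T
    rw [if_neg h1, Nat.add_sub_cancel_left]
    exact Q.last
  mono := by
    intro i hi
    show (if i ≤ P.N then P.pts i else Q.pts (i - P.N))
      < (if i + 1 ≤ P.N then P.pts (i + 1) else Q.pts (i + 1 - P.N))
    rcases lt_trichotomy i P.N with h | h | h
    · rw [if_pos h.le, if_pos (by omega : i + 1 ≤ P.N)]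
      exact P.mono i h
    · rw [if_pos (le_of_eq h), if_neg (by omega : ¬ (i + 1 ≤ P.N)),
        (by omega : i + 1 - P.N = 1), h, P.last]
      exact lt_of_le_of_lt Q.first.ge (Q.mono 0 Q.hN)
    · rw [if_neg (by omega : ¬ (i ≤ P.N)), if_neg (by omega : ¬ (i + 1 ≤ P.N)),
        (by omega : i + 1 - P.N = (i - P.N) + 1)]
      exact Q.mono (i - P.N) (by omega)

lemma IvlPartition.glue_N {S b T : ℝ} (P : IvlPartition S b) (Q : IvlPartition b T) :
    (P.glue Q).N = P.N + Q.N := rfl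

lemma IvlPartition.glue_pts_le {S b T : ℝ} (P : IvlPartition S b) (Q : IvlPartition b T) {i : ℕ}
    (h : i ≤ P.N) : (P.glue Q).pts i = P.pts i := if_pos h

lemma IvlPartition.glue_pts_add {S b T : ℝ} (P : IvlPartition S b) (Q : IvlPartition b T) (i : ℕ) :
    (P.glue Q).pts (P.N + i) = Q.pts i := by
  rcases Nat.eq_zero_or_pos i with rfl | h
  · show (if P.N + 0 ≤ P.N then P.pts (P.N + 0) else _) = _
    rw [if_pos (by omega)]
    simp [P.last, Q.first]
  · show (if P.N + i ≤ P.N then _ else Q.pts (P.N + i - P.N)) = _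
    rw [if_neg (by omega), Nat.add_sub_cancel_left]

lemma IvlPartition.glue_diamLE {S b T ε : ℝ} (P : IvlPartition S b) (Q : IvlPartition b T)
    (hP : P.diamLE ε) (hQ : Q.diamLE ε) : (P.glue Q).diamLE ε := by
  intro i hi
  rw [IvlPartition.glue_N] at hi
  rcases Nat.lt_or_ge i P.N with h | h
  · rw [IvlPartition.glue_pts_le P Q (by omega : i + 1 ≤ P.N), IvlPartition.glue_pts_le P Q (by omega)]
    exact hP i h
  · obtain ⟨j, rfl⟩ : ∃ j, i = P.N + j := ⟨i - P.N, by omega⟩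
    rw [show P.N + j + 1 = P.N + (j + 1) from rfl, IvlPartition.glue_pts_add, IvlPartition.glue_pts_add]
    exact hQ j (by omega)

lemma mvSum_glue {n k : ℕ} (F : ℝ → En n → En k → Set (En n)) (xbar : ℝ → En n)
    (A : Set (En k)) (δ : ℝ) {S b T : ℝ} (P : IvlPartition S b) (Q : IvlPartition b T) :
    mvSum F xbar A δ (P.glue Q) = mvSum F xbar A δ P + mvSum F xbar A δ Q := by
  unfold mvSum
  rw [IvlPartition.glue_N, Finset.sum_range_add]
  congr 1
  · refine Finset.sum_congr rfl fun i hi => ?_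
    have hi := Finset.mem_range.1 hi
    rw [IvlPartition.glue_pts_le P Q (by omega : i + 1 ≤ P.N), IvlPartition.glue_pts_le P Q (by omega)]
  · refine Finset.sum_congr rfl fun i hi => ?_
    have hi := Finset.mem_range.1 hi
    rw [show P.N + i + 1 = P.N + (i + 1) from rfl, IvlPartition.glue_pts_add, IvlPartition.glue_pts_add]

/-- Uniform partition of `[a,b]` with mesh at most `ε`. -/
def IvlPartition.uniform (a b ε : ℝ) (hab : a < b) (hε : 0 < ε) : IvlPartition a b where
  N := ⌈(b - a) / ε⌉₊
  pts i := a + i * ((b - a) / ⌈(b - a) / ε⌉₊)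
  hN := Nat.ceil_pos.2 (div_pos (by linarith) hε)
  first := by simp
  last := by
    have hN : (0:ℝ) < (⌈(b - a) / ε⌉₊ : ℝ) := by
      exact_mod_cast Nat.ceil_pos.2 (div_pos (by linarith) hε)
    field_simp
    ring
  mono := by
    intro i hi
    have hN : (0:ℝ) < (⌈(b - a) / ε⌉₊ : ℝ) := by
      exact_mod_cast Nat.ceil_pos.2 (div_pos (by linarith) hε)
    have hc : 0 < (b - a) / (⌈(b - a) / ε⌉₊ : ℝ) := div_pos (by linarith) hN
    have hii : (i:ℝ) < ((i:ℝ) + 1) := by linarith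
    push_cast
    nlinarith

lemma IvlPartition.uniform_diamLE (a b ε : ℝ) (hab : a < b) (hε : 0 < ε) :
    (IvlPartition.uniform a b ε hab hε).diamLE ε := by
  intro i hi
  have hN : (0:ℝ) < (⌈(b - a) / ε⌉₊ : ℝ) := by
    exact_mod_cast Nat.ceil_pos.2 (div_pos (by linarith) hε)
  have h1 : (b - a) / ε ≤ (⌈(b - a) / ε⌉₊ : ℝ) := Nat.le_ceil _
  rw [div_le_iff₀ hε] at h1
  show a + ((i:ℕ) + 1 : ℕ) * ((b - a) / ⌈(b - a) / ε⌉₊) - (a + i * ((b - a) / ⌈(b - a) / ε⌉₊)) ≤ ε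
  have h2 : (b - a) / (⌈(b - a) / ε⌉₊ : ℝ) ≤ ε := by
    rw [div_le_iff₀ hN]
    linarith
  push_cast
  nlinarith

/-- The two-point partition of `[a,b]`. -/
def IvlPartition.single (a b : ℝ) (h : a < b) : IvlPartition a b where
  N := 1
  pts i := if i = 0 then a else b
  hN := one_pos
  first := by simp
  last := by simp
  mono := by
    intro i hi
    obtain rfl : i = 0 := by omega
    simpa using h

lemma IvlPartition.single_diamLE {a b ε : ℝ} (h : a < b) (hd : b - a ≤ ε) :
    (IvlPartition.single a b h).diamLE ε := by
  intro i hi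
  obtain rfl : i = 0 := Nat.lt_one_iff.1 hi
  simpa [IvlPartition.single] using hd

lemma mvSum_single {n k : ℕ} (F : ℝ → En n → En k → Set (En n)) (xbar : ℝ → En n)
    (A : Set (En k)) (δ : ℝ) {a b : ℝ} (h : a < b) :
    mvSum F xbar A δ (IvlPartition.single a b h)
      = ⨆ x ∈ xbar '' Set.Icc a b + Metric.closedBall (0 : En n) δ,
          ⨆ a' ∈ A, EMetric.hausdorffEdist (F b x a') (F a x a') := by
  unfold mvSum
  rw [show (IvlPartition.single a b h).N = 1 from rfl, Finset.sum_range_one]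
  norm_num [IvlPartition.single]

end Aux
section Aux2

lemma exists_partition_bound {n k : ℕ} (F : ℝ → En n → En k → Set (En n))
    (xbar : ℝ → En n) (A : Set (En k)) (δbar ε₀ : ℝ) (hε₀ : 0 < ε₀)
    (ε : ℝ≥0∞) (S : ℝ) (s t : ℕ → ℝ) :
    ∀ K : ℕ,
      (∀ j ≤ K, S < s j ∧ s j < t j ∧ t j - s j ≤ ε₀) →
      (∀ j < K, t j < s (j + 1)) →
      (∀ j ≤ K, ε ≤ ⨆ x ∈ xbar '' Set.Icc (s j) (t j) + Metric.closedBall (0 : En n) δbar,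
        ⨆ a ∈ A, EMetric.hausdorffEdist (F (t j) x a) (F (s j) x a)) →
      ∃ P : IvlPartition S (t K), P.diamLE ε₀ ∧ ((K : ℝ≥0∞) + 1) * ε ≤ mvSum F xbar A δbar P := by
  intro K
  induction K with
  | zero =>
    intro h1 h2 h3
    obtain ⟨hS0, hst0, hd0⟩ := h1 0 le_rfl
    refine ⟨(IvlPartition.uniform S (s 0) ε₀ hS0 hε₀).glue (IvlPartition.single (s 0) (t 0) hst0),
      IvlPartition.glue_diamLE _ _ (IvlPartition.uniform_diamLE _ _ _ _ _)
        (IvlPartition.single_diamLE _ hd0), ?_⟩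
    rw [mvSum_glue, mvSum_single]
    calc ((0 : ℕ) + 1 : ℝ≥0∞) * ε = ε := by norm_num
    _ ≤ _ := h3 0 le_rfl
    _ ≤ _ := le_add_self
  | succ K ih =>
    intro h1 h2 h3
    obtain ⟨P, hPd, hPs⟩ := ih (fun j hj => h1 j (by omega)) (fun j hj => h2 j (by omega))
      (fun j hj => h3 j (by omega))
    obtain ⟨hS1, hst1, hd1⟩ := h1 (K + 1) le_rfl
    have hts : t K < s (K + 1) := h2 K (by omega)
    refine ⟨P.glue ((IvlPartition.uniform (t K) (s (K + 1)) ε₀ hts hε₀).glue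
        (IvlPartition.single (s (K + 1)) (t (K + 1)) hst1)),
      IvlPartition.glue_diamLE _ _ hPd (IvlPartition.glue_diamLE _ _
        (IvlPartition.uniform_diamLE _ _ _ _ _) (IvlPartition.single_diamLE _ hd1)), ?_⟩
    rw [mvSum_glue, mvSum_glue, mvSum_single]
    have heq : (((K + 1 : ℕ) : ℝ≥0∞) + 1) * ε = ((K : ℝ≥0∞) + 1) * ε + ε := by
      push_cast
      ring
    rw [heq]
    exact add_le_add hPs (le_trans (h3 (K + 1) le_rfl) le_add_self)

lemma mvEtaEps_ge {n k : ℕ} (F : ℝ → En n → En k → Set (En n))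
    (xbar : ℝ → En n) (A : Set (En k)) (δbar ε₀ : ℝ) (hε₀ : 0 < ε₀)
    (ε : ℝ≥0∞) (S T : ℝ) (s t : ℕ → ℝ) (K : ℕ)
    (h1 : ∀ j ≤ K, S < s j ∧ s j < t j ∧ t j - s j ≤ ε₀)
    (h2 : ∀ j < K, t j < s (j + 1))
    (h3 : ∀ j ≤ K, ε ≤ ⨆ x ∈ xbar '' Set.Icc (s j) (t j) + Metric.closedBall (0 : En n) δbar,
        ⨆ a ∈ A, EMetric.hausdorffEdist (F (t j) x a) (F (s j) x a))
    (hT : t K < T) :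
    ((K : ℝ≥0∞) + 1) * ε ≤ mvEtaEps F xbar A δbar ε₀ S T := by
  obtain ⟨P, hPd, hPs⟩ := exists_partition_bound F xbar A δbar ε₀ hε₀ ε S s t K h1 h2 h3
  refine le_trans ?_ (le_iSup₂_of_le (P.glue (IvlPartition.uniform (t K) T ε₀ hT hε₀))
    (IvlPartition.glue_diamLE _ _ hPd (IvlPartition.uniform_diamLE _ _ _ _ _)) le_rfl)
  rw [mvSum_glue]
  exact hPs.trans le_self_add

end Aux2
section Aux3

lemma claimC_right {n k : ℕ} (F : ℝ → En n → En k → Set (En n)) (xbar : ℝ → En n)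
    (A : Set (En k)) (S T : ℝ) (δbar : ℝ)
    (hfin : mvEtaDelta F xbar A δbar S T < ⊤)
    (hx : ContinuousOn xbar (Set.Icc S T)) (δ : ℝ) (hδ : δ ∈ Set.Ioo 0 δbar)
    (sbar : ℝ) (hsbar : sbar ∈ Set.Ico S T) (ε : ℝ≥0∞) (hε : 0 < ε) (hεtop : ε ≠ ⊤) :
    ∃ r, sbar < r ∧ r ≤ T ∧ ∀ s' ∈ Set.Ioc sbar r, ∀ t' ∈ Set.Ioc sbar r,
      ∀ x ∈ Metric.closedBall (xbar sbar) δ, ∀ a ∈ A,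
        EMetric.hausdorffEdist (F t' x a) (F s' x a) ≤ ε := by
  obtain ⟨ε₀, hε₀, hM⟩ : ∃ ε₀, 0 < ε₀ ∧ mvEtaEps F xbar A δbar ε₀ S T < ⊤ := by
    by_contra h
    push_neg at h
    have htop : mvEtaDelta F xbar A δbar S T = ⊤ := by
      unfold mvEtaDelta
      simp only [iInf_eq_top]
      intro e he
      exact top_le_iff.1 (h e he)
    rw [htop] at hfin
    exact absurd hfin (lt_irrefl _)
  obtain ⟨ρ, hρ, hρc⟩ : ∃ ρ, 0 < ρ ∧ ∀ u ∈ Set.Icc S T, dist u sbar < ρ →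
      dist (xbar u) (xbar sbar) ≤ δbar - δ := by
    have hc := hx sbar ⟨hsbar.1, hsbar.2.le⟩
    rw [Metric.continuousWithinAt_iff] at hc
    obtain ⟨ρ, hρ, h⟩ := hc (δbar - δ) (by linarith [hδ.1, hδ.2])
    exact ⟨ρ, hρ, fun u hu hd => (h hu hd).le⟩
  set r₀ : ℝ := min (min ((sbar + T) / 2) (sbar + ε₀)) (sbar + ρ / 2) with hr₀def
  have hsT := hsbar.2
  have hr₀1 : sbar < r₀ :=
    lt_min (lt_min (by linarith) (by linarith)) (by linarith)
  have hr₀2 : r₀ < T :=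
    lt_of_le_of_lt (le_trans (min_le_left _ _) (min_le_left _ _)) (by linarith)
  have hr₀3 : r₀ ≤ sbar + ε₀ := le_trans (min_le_left _ _) (min_le_right _ _)
  have hr₀4 : r₀ ≤ sbar + ρ / 2 := min_le_right _ _
  by_contra hcon
  push_neg at hcon
  have hbad : ∀ r, sbar < r → r ≤ T → ∃ p : ℝ × ℝ × En n × En k,
      sbar < p.1 ∧ p.1 < p.2.1 ∧ p.2.1 ≤ r ∧ p.2.2.1 ∈ Metric.closedBall (xbar sbar) δ ∧
      p.2.2.2 ∈ A ∧ ε < EMetric.hausdorffEdist (F p.2.1 p.2.2.1 p.2.2.2) (F p.1 p.2.2.1 p.2.2.2) := by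
    intro r h1 h2
    obtain ⟨s', hs', t', ht', x, hx', a, ha, hlt⟩ := hcon r h1 h2
    rcases lt_trichotomy s' t' with h | h | h
    · exact ⟨(s', t', x, a), hs'.1, h, ht'.2, hx', ha, hlt⟩
    · subst h
      rw [EMetric.hausdorffEdist, Metric.hausdorffEDist_self] at hlt
      exact absurd hlt (by simp)
    · exact ⟨(t', s', x, a), ht'.1, h, hs'.2, hx', ha, by
        rwa [EMetric.hausdorffEdist, Metric.hausdorffEDist_comm]⟩
  set Good : ℝ × ℝ × En n × En k → Prop := fun p =>
    sbar < p.1 ∧ p.1 < p.2.1 ∧ p.2.1 ≤ r₀ ∧ p.2.2.1 ∈ Metric.closedBall (xbar sbar) δ ∧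
    p.2.2.2 ∈ A ∧ ε < EMetric.hausdorffEdist (F p.2.1 p.2.2.1 p.2.2.2) (F p.1 p.2.2.1 p.2.2.2)
    with hGood
  obtain ⟨p0, hp0⟩ : ∃ p, Good p := hbad r₀ hr₀1 hr₀2.le
  have hstep : ∀ (m : ℕ) (p : ℝ × ℝ × En n × En k), Good p →
      ∃ q, Good q ∧ q.2.1 < p.1 := by
    intro m p hp
    obtain ⟨hp1, hp2, hp3, -, -, -⟩ := hp
    obtain ⟨q, h1, h2, h3, h4, h5, h6⟩ := hbad ((sbar + p.1) / 2) (by linarith)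
      (by linarith)
    exact ⟨q, ⟨h1, h2, le_trans h3 (by linarith), h4, h5, h6⟩,
      lt_of_le_of_lt h3 (by linarith)⟩
  obtain ⟨g, -, hg1, hg2⟩ := dchoice (fun _ p => Good p) (fun _ p q => q.2.1 < p.1) p0 hp0 hstep
  have hKbound : ∀ K : ℕ, ((K : ℝ≥0∞) + 1) * ε ≤ mvEtaEps F xbar A δbar ε₀ S T := by
    intro K
    set s : ℕ → ℝ := fun j => (g (K - j)).1 with hs
    set t : ℕ → ℝ := fun j => (g (K - j)).2.1 with ht
    have hmem : ∀ j, sbar < s j ∧ s j < t j ∧ t j ≤ r₀ := fun j =>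
      ⟨(hg1 (K - j)).1, (hg1 (K - j)).2.1, (hg1 (K - j)).2.2.1⟩
    refine mvEtaEps_ge F xbar A δbar ε₀ hε₀ ε S T s t K ?_ ?_ ?_ ?_
    · intro j hj
      obtain ⟨a1, a2, a3⟩ := hmem j
      exact ⟨by linarith [hsbar.1], a2, by linarith⟩
    · intro j hj
      have := hg2 (K - j - 1)
      rw [show K - j - 1 + 1 = K - j from by omega] at this
      show (g (K - j)).2.1 < (g (K - (j + 1))).1
      rw [show K - (j + 1) = K - j - 1 from by omega]
      exact this
    · intro j hj
      obtain ⟨a1, a2, a3⟩ := hmem j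
      obtain ⟨-, -, -, h4, h5, h6⟩ := hg1 (K - j)
      have hsj : s j ∈ Set.Icc S T := ⟨by linarith [hsbar.1], by linarith⟩
      have hdist : dist (s j) sbar < ρ := by
        rw [Real.dist_eq, abs_of_pos (by linarith)]
        linarith
      have hxc : dist (xbar (s j)) (xbar sbar) ≤ δbar - δ := hρc _ hsj hdist
      have hxm : (g (K - j)).2.2.1 ∈ xbar '' Set.Icc (s j) (t j)
          + Metric.closedBall (0 : En n) δbar := by
        rw [Set.mem_add]
        refine ⟨xbar (s j), ⟨s j, ⟨le_rfl, a2.le⟩, rfl⟩,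
          (g (K - j)).2.2.1 - xbar (s j), ?_, by abel⟩
        rw [mem_closedBall_zero_iff, ← dist_eq_norm]
        calc dist ((g (K - j)).2.2.1) (xbar (s j))
            ≤ dist ((g (K - j)).2.2.1) (xbar sbar) + dist (xbar sbar) (xbar (s j)) :=
              dist_triangle _ _ _
          _ ≤ δ + (δbar - δ) := add_le_add (Metric.mem_closedBall.1 h4) (by
              rw [dist_comm]; exact hxc)
          _ = δbar := by ring
      exact le_trans h6.le (le_iSup₂_of_le _ hxm (le_iSup₂_of_le _ h5 le_rfl))
    · exact lt_of_le_of_lt (hmem K).2.2 hr₀2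
  obtain ⟨m, hm⟩ := ENNReal.exists_nat_gt (ENNReal.div_lt_top hM.ne hε.ne').ne
  have hlt : mvEtaEps F xbar A δbar ε₀ S T < ((m : ℝ≥0∞) + 1) * ε := by
    have h1 : mvEtaEps F xbar A δbar ε₀ S T < (m : ℝ≥0∞) * ε :=
      (ENNReal.div_lt_iff (Or.inl hε.ne') (Or.inl hεtop)).1 hm
    exact lt_of_lt_of_le h1 (mul_le_mul_left le_self_add _)
  exact absurd (hKbound m) (not_le.2 hlt)

end Aux3
section Aux4

lemma claimC_left {n k : ℕ} (F : ℝ → En n → En k → Set (En n)) (xbar : ℝ → En n)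
    (A : Set (En k)) (S T : ℝ) (δbar : ℝ)
    (hfin : mvEtaDelta F xbar A δbar S T < ⊤)
    (hx : ContinuousOn xbar (Set.Icc S T)) (δ : ℝ) (hδ : δ ∈ Set.Ioo 0 δbar)
    (tbar : ℝ) (htbar : tbar ∈ Set.Ioc S T) (ε : ℝ≥0∞) (hε : 0 < ε) (hεtop : ε ≠ ⊤) :
    ∃ r, S ≤ r ∧ r < tbar ∧ ∀ s' ∈ Set.Ico r tbar, ∀ t' ∈ Set.Ico r tbar,
      ∀ x ∈ Metric.closedBall (xbar tbar) δ, ∀ a ∈ A,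
        EMetric.hausdorffEdist (F t' x a) (F s' x a) ≤ ε := by
  obtain ⟨ε₀, hε₀, hM⟩ : ∃ ε₀, 0 < ε₀ ∧ mvEtaEps F xbar A δbar ε₀ S T < ⊤ := by
    by_contra h
    push_neg at h
    have htop : mvEtaDelta F xbar A δbar S T = ⊤ := by
      unfold mvEtaDelta
      simp only [iInf_eq_top]
      intro e he
      exact top_le_iff.1 (h e he)
    rw [htop] at hfin
    exact absurd hfin (lt_irrefl _)
  obtain ⟨ρ, hρ, hρc⟩ : ∃ ρ, 0 < ρ ∧ ∀ u ∈ Set.Icc S T, dist u tbar < ρ →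
      dist (xbar u) (xbar tbar) ≤ δbar - δ := by
    have hc := hx tbar ⟨htbar.1.le, htbar.2⟩
    rw [Metric.continuousWithinAt_iff] at hc
    obtain ⟨ρ, hρ, h⟩ := hc (δbar - δ) (by linarith [hδ.1, hδ.2])
    exact ⟨ρ, hρ, fun u hu hd => (h hu hd).le⟩
  set r₀ : ℝ := max (max ((S + tbar) / 2) (tbar - ε₀)) (tbar - ρ / 2) with hr₀def
  have hSt := htbar.1
  have hr₀1 : r₀ < tbar :=
    max_lt (max_lt (by linarith) (by linarith)) (by linarith)
  have hr₀2 : S < r₀ :=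
    lt_of_lt_of_le (by linarith : S < (S + tbar) / 2)
      (le_trans (le_max_left _ _) (le_max_left _ _))
  have hr₀3 : tbar - ε₀ ≤ r₀ := le_trans (le_max_right _ _) (le_max_left _ _)
  have hr₀4 : tbar - ρ / 2 ≤ r₀ := le_max_right _ _
  by_contra hcon
  push_neg at hcon
  have hbad : ∀ r, S ≤ r → r < tbar → ∃ p : ℝ × ℝ × En n × En k,
      r ≤ p.1 ∧ p.1 < p.2.1 ∧ p.2.1 < tbar ∧ p.2.2.1 ∈ Metric.closedBall (xbar tbar) δ ∧
      p.2.2.2 ∈ A ∧ ε < EMetric.hausdorffEdist (F p.2.1 p.2.2.1 p.2.2.2) (F p.1 p.2.2.1 p.2.2.2) := by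
    intro r h1 h2
    obtain ⟨s', hs', t', ht', x, hx', a, ha, hlt⟩ := hcon r h1 h2
    rcases lt_trichotomy s' t' with h | h | h
    · exact ⟨(s', t', x, a), hs'.1, h, ht'.2, hx', ha, hlt⟩
    · subst h
      rw [EMetric.hausdorffEdist, Metric.hausdorffEDist_self] at hlt
      exact absurd hlt (by simp)
    · exact ⟨(t', s', x, a), ht'.1, h, hs'.2, hx', ha, by
        rwa [EMetric.hausdorffEdist, Metric.hausdorffEDist_comm]⟩
  set Good : ℝ × ℝ × En n × En k → Prop := fun p =>
    r₀ ≤ p.1 ∧ p.1 < p.2.1 ∧ p.2.1 < tbar ∧ p.2.2.1 ∈ Metric.closedBall (xbar tbar) δ ∧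
    p.2.2.2 ∈ A ∧ ε < EMetric.hausdorffEdist (F p.2.1 p.2.2.1 p.2.2.2) (F p.1 p.2.2.1 p.2.2.2)
    with hGood
  obtain ⟨p0, hp0⟩ : ∃ p, Good p := hbad r₀ hr₀2.le hr₀1
  have hstep : ∀ (m : ℕ) (p : ℝ × ℝ × En n × En k), Good p →
      ∃ q, Good q ∧ p.2.1 < q.1 := by
    intro m p hp
    obtain ⟨hp1, hp2, hp3, -, -, -⟩ := hp
    obtain ⟨q, h1, h2, h3, h4, h5, h6⟩ := hbad ((p.2.1 + tbar) / 2) (by linarith)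
      (by linarith)
    exact ⟨q, ⟨by linarith, h2, h3, h4, h5, h6⟩, by linarith⟩
  obtain ⟨g, -, hg1, hg2⟩ := dchoice (fun _ p => Good p) (fun _ p q => p.2.1 < q.1) p0 hp0 hstep
  have hKbound : ∀ K : ℕ, ((K : ℝ≥0∞) + 1) * ε ≤ mvEtaEps F xbar A δbar ε₀ S T := by
    intro K
    set s : ℕ → ℝ := fun j => (g j).1 with hs
    set t : ℕ → ℝ := fun j => (g j).2.1 with ht
    have hmem : ∀ j, r₀ ≤ s j ∧ s j < t j ∧ t j < tbar := fun j =>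
      ⟨(hg1 j).1, (hg1 j).2.1, (hg1 j).2.2.1⟩
    refine mvEtaEps_ge F xbar A δbar ε₀ hε₀ ε S T s t K ?_ ?_ ?_ ?_
    · intro j hj
      obtain ⟨a1, a2, a3⟩ := hmem j
      exact ⟨by linarith, a2, by linarith⟩
    · intro j hj
      exact hg2 j
    · intro j hj
      obtain ⟨a1, a2, a3⟩ := hmem j
      obtain ⟨-, -, -, h4, h5, h6⟩ := hg1 j
      have hsj : s j ∈ Set.Icc S T := ⟨by linarith, by linarith [htbar.2]⟩
      have hdist : dist (s j) tbar < ρ := by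
        rw [Real.dist_eq, abs_of_neg (by linarith)]
        linarith
      have hxc : dist (xbar (s j)) (xbar tbar) ≤ δbar - δ := hρc _ hsj hdist
      have hxm : (g j).2.2.1 ∈ xbar '' Set.Icc (s j) (t j)
          + Metric.closedBall (0 : En n) δbar := by
        rw [Set.mem_add]
        refine ⟨xbar (s j), ⟨s j, ⟨le_rfl, a2.le⟩, rfl⟩,
          (g j).2.2.1 - xbar (s j), ?_, by abel⟩
        rw [mem_closedBall_zero_iff, ← dist_eq_norm]
        calc dist ((g j).2.2.1) (xbar (s j))
            ≤ dist ((g j).2.2.1) (xbar tbar) + dist (xbar tbar) (xbar (s j)) :=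
              dist_triangle _ _ _
          _ ≤ δ + (δbar - δ) := add_le_add (Metric.mem_closedBall.1 h4) (by
              rw [dist_comm]; exact hxc)
          _ = δbar := by ring
      exact le_trans h6.le (le_iSup₂_of_le _ hxm (le_iSup₂_of_le _ h5 le_rfl))
    · exact lt_of_lt_of_le (hmem K).2.2 htbar.2
  obtain ⟨m, hm⟩ := ENNReal.exists_nat_gt (ENNReal.div_lt_top hM.ne hε.ne').ne
  have hlt : mvEtaEps F xbar A δbar ε₀ S T < ((m : ℝ≥0∞) + 1) * ε := by
    have h1 : mvEtaEps F xbar A δbar ε₀ S T < (m : ℝ≥0∞) * ε :=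
      (ENNReal.div_lt_iff (Or.inl hε.ne') (Or.inl hεtop)).1 hm
    exact lt_of_lt_of_le h1 (mul_le_mul_left le_self_add _)
  exact absurd (hKbound m) (not_le.2 hlt)

end Aux4
section Aux5

lemma lt_two_mul_self_ennreal {c : ℝ≥0∞} (h0 : c ≠ 0) (ht : c ≠ ⊤) : c < 2 * c := by
  nth_rewrite 1 [← one_mul c]
  exact ENNReal.mul_lt_mul_left h0 ht ENNReal.one_lt_two

lemma lemD {n k : ℕ} (F : ℝ → En n → En k → Set (En n)) (A : Set (En k))
    (x₀ : En n) (δ : ℝ) (l : Filter ℝ) [hl : l.NeBot]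
    (claim : ∀ ε : ℝ≥0∞, 0 < ε → ε ≠ ⊤ →
      ∃ U ∈ l, ∀ s ∈ U, ∀ t ∈ U, ∀ x ∈ Metric.closedBall x₀ δ, ∀ a ∈ A,
        EMetric.hausdorffEdist (F t x a) (F s x a) ≤ ε) :
    Tendsto (fun s => ⨆ x ∈ Metric.closedBall x₀ δ, ⨆ a ∈ A,
      EMetric.hausdorffEdist (kLiminf l (fun σ' => F σ' x a)) (F s x a)) l (𝓝 0) := by
  rw [ENNReal.tendsto_nhds_zero]
  intro ε hε
  rcases eq_or_ne ε ⊤ with rfl | hεtop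
  · exact Filter.Eventually.of_forall fun s => le_top
  set β := ε / 8 with hβdef
  have hβ0 : (0 : ℝ≥0∞) < β := ENNReal.div_pos hε.ne' (by norm_num)
  have hβtop : β ≠ ⊤ := (ENNReal.div_lt_top hεtop (by norm_num)).ne
  have hβε : 6 * β ≤ ε := by
    calc 6 * β ≤ 8 * β := by gcongr <;> norm_num
    _ = ε := ENNReal.mul_div_cancel' (by norm_num) (by norm_num)
  have hhalf : (2⁻¹ : ℝ≥0∞) ≠ 0 := by simp
  have hhalftop : (2⁻¹ : ℝ≥0∞) ≠ ⊤ := by simp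
  have hpow : ∀ m : ℕ, 0 < β * 2⁻¹ ^ m ∧ β * 2⁻¹ ^ m ≠ ⊤ := fun m =>
    ⟨ENNReal.mul_pos hβ0.ne' (pow_ne_zero m hhalf),
     ENNReal.mul_ne_top hβtop (ENNReal.pow_ne_top hhalftop)⟩
  choose U hUl hU using fun m : ℕ => claim (β * 2⁻¹ ^ m) (hpow m).1 (hpow m).2
  have hVl : ∀ m : ℕ, (⋂ j ∈ Finset.range (m + 1), U j) ∈ l := fun m =>
    (Filter.biInter_mem (Finset.range (m + 1)).finite_toSet).2 fun j _ => hUl j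
  choose σ hσ using fun m => Filter.nonempty_of_mem (hVl m)
  have hσU : ∀ m j, j ≤ m → σ m ∈ U j := by
    intro m j hj
    have h := hσ m
    simp only [Set.mem_iInter] at h
    exact h j (Finset.mem_range.2 (by omega))
  filter_upwards [hUl 0] with s hs
  refine iSup₂_le fun x hx => iSup₂_le fun a ha => ?_
  have hd : ∀ m, ∀ p ∈ U m, ∀ q ∈ U m,
      EMetric.hausdorffEdist (F p x a) (F q x a) ≤ β * 2⁻¹ ^ m := fun m p hp q hq =>
    hU m q hq p hp x hx a ha
  refine le_trans (EMetric.hausdorffEdist_le_of_infEdist ?_ ?_) hβε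
  · intro v hv
    have hvt : Tendsto (fun σ' => EMetric.infEdist v (F σ' x a)) l (𝓝 0) := hv
    have h1 : EMetric.infEdist v (F s x a) ≤ β := by
      refine ENNReal.le_of_forall_pos_le_add fun η hη _ => ?_
      have h2 : ∀ᶠ σ' in l, EMetric.infEdist v (F σ' x a) ≤ η ∧ σ' ∈ U 0 :=
        (ENNReal.tendsto_nhds_zero.1 hvt η (by exact_mod_cast hη)).and (hUl 0)
      obtain ⟨σ', hσ1, hσ2⟩ := h2.exists
      calc EMetric.infEdist v (F s x a)
          ≤ EMetric.infEdist v (F σ' x a) + EMetric.hausdorffEdist (F σ' x a) (F s x a) :=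
            EMetric.infEdist_le_infEdist_add_hausdorffEdist
        _ ≤ η + β * 2⁻¹ ^ 0 := add_le_add hσ1 (hd 0 σ' hσ2 s hs)
        _ = β + η := by rw [pow_zero, mul_one, add_comm]
    exact h1.trans (le_mul_of_one_le_left zero_le (by norm_num))
  · intro u hu
    have h0 : EMetric.infEdist u (F (σ 0) x a) < 2 * β := by
      refine lt_of_le_of_lt (le_trans (EMetric.infEdist_le_hausdorffEdist_of_mem hu)
        (by simpa [EMetric.hausdorffEdist] using hd 0 s hs (σ 0) (hσU 0 0 le_rfl))) ?_
      exact lt_two_mul_self_ennreal hβ0.ne' hβtop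
    obtain ⟨u0, hu0m, hu0e⟩ := EMetric.infEdist_lt_iff.1 h0
    have hstep : ∀ (m : ℕ) (w : En n), w ∈ F (σ m) x a →
        ∃ w', w' ∈ F (σ (m + 1)) x a ∧ edist w w' ≤ 2 * β * 2⁻¹ ^ m := by
      intro m w hw
      have h1 : EMetric.infEdist w (F (σ (m + 1)) x a) ≤ β * 2⁻¹ ^ m :=
        le_trans (EMetric.infEdist_le_hausdorffEdist_of_mem hw)
          (hd m (σ m) (hσU m m le_rfl) (σ (m + 1)) (hσU (m + 1) m (by omega)))
      have h2 : EMetric.infEdist w (F (σ (m + 1)) x a) < 2 * (β * 2⁻¹ ^ m) :=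
        lt_of_le_of_lt h1 (lt_two_mul_self_ennreal (hpow m).1.ne' (hpow m).2)
      obtain ⟨w', hw', he⟩ := EMetric.infEdist_lt_iff.1 h2
      exact ⟨w', hw', by rw [mul_assoc]; exact he.le⟩
    obtain ⟨g, hg0, hgm, hge⟩ := dchoice (fun m w => w ∈ F (σ m) x a)
      (fun m w w' => edist w w' ≤ 2 * β * 2⁻¹ ^ m) u0 hu0m hstep
    have hge' : ∀ m, edist (g m) (g (m + 1)) ≤ (2 * β) * 2⁻¹ ^ m := hge
    have hcs : CauchySeq g := cauchySeq_of_edist_le_geometric 2⁻¹ (2 * β)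
      (ENNReal.inv_lt_one.2 ENNReal.one_lt_two) (ENNReal.mul_ne_top (by norm_num) hβtop) hge'
    obtain ⟨v, hv⟩ := cauchySeq_tendsto_of_complete hcs
    have hgv : ∀ m, edist (g m) v ≤ 4 * β * 2⁻¹ ^ m := by
      intro m
      calc edist (g m) v ≤ 2 * β * 2⁻¹ ^ m / (1 - 2⁻¹) :=
            edist_le_of_edist_le_geometric_of_tendsto 2⁻¹ (2 * β) hge' hv m
        _ = 2 * β * 2⁻¹ ^ m * 2 := by
            rw [ENNReal.one_sub_inv_two, div_eq_mul_inv, inv_inv]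
        _ = 4 * β * 2⁻¹ ^ m := by ring
    have hvL : v ∈ kLiminf l (fun σ' => F σ' x a) := by
      show Tendsto (fun σ' => EMetric.infEdist v (F σ' x a)) l (𝓝 0)
      rw [ENNReal.tendsto_nhds_zero]
      intro η hη
      have h5 : Tendsto (fun m : ℕ => 5 * β * 2⁻¹ ^ m) atTop (𝓝 0) := by
        have h6 := ENNReal.tendsto_pow_atTop_nhds_zero_of_lt_one
          (ENNReal.inv_lt_one.2 ENNReal.one_lt_two)
        have h7 := ENNReal.Tendsto.const_mul (a := 5 * β) h6
          (Or.inr (ENNReal.mul_ne_top (by norm_num) hβtop))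
        simpa [mul_assoc] using h7
      obtain ⟨m, hm⟩ := (ENNReal.tendsto_nhds_zero.1 h5 η hη).exists
      filter_upwards [hUl m] with σ' hσ'
      calc EMetric.infEdist v (F σ' x a)
          ≤ EMetric.infEdist (g m) (F σ' x a) + edist v (g m) :=
            EMetric.infEdist_le_infEdist_add_edist
        _ ≤ EMetric.hausdorffEdist (F (σ m) x a) (F σ' x a) + edist v (g m) :=
            add_le_add_left (EMetric.infEdist_le_hausdorffEdist_of_mem (hgm m)) _
        _ ≤ β * 2⁻¹ ^ m + 4 * β * 2⁻¹ ^ m :=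
            add_le_add (hd m (σ m) (hσU m m le_rfl) σ' hσ')
              (by rw [edist_comm]; exact hgv m)
        _ = 5 * β * 2⁻¹ ^ m := by ring
        _ ≤ η := hm
    have hedist : edist u v ≤ 6 * β := by
      have hg0v : edist u0 v ≤ 4 * β := by
        have := hgv 0
        rw [hg0] at this
        simpa using this
      calc edist u v ≤ edist u u0 + edist u0 v := edist_triangle _ _ _
        _ ≤ 2 * β + 4 * β := add_le_add hu0e.le hg0v
        _ = 6 * β := by ring
    exact le_trans (EMetric.infEdist_le_edist_of_mem hvL) hedist

end Aux5

/-- Under bounded variation along `x̄` uniformly over `A`,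
`η^δ̄(T) < ∞`, (C1) and (C2), for every `δ ∈ (0,δ̄)`:
for every `s̄ ∈ [S,T)`, `sup{ d_H(F(s̄⁺,x,a), F(s,x,a)) : x ∈ x̄(s̄)+δ𝔹, a ∈ A } → 0`
as `s ↓ s̄`, and for every `t̄ ∈ (S,T]`,
`sup{ d_H(F(t̄⁻,x,a), F(t,x,a)) : x ∈ x̄(t̄)+δ𝔹, a ∈ A } → 0` as `t ↑ t̄`. -/
theorem statement2 {n k : ℕ} (F : ℝ → En n → En k → Set (En n))
    (xbar : ℝ → En n) (A : Set (En k)) (S T : ℝ) (hST : S < T)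
    (hA : IsCompact A) (hx : ContinuousOn xbar (Set.Icc S T))
    (hBV : HasBVAlongUniformly F xbar A S T)
    (δbar : ℝ) (hδbar : 0 < δbar) (hfin : mvEtaDelta F xbar A δbar S T < ⊤)
    (hC1 : HypC1 F xbar A S T δbar) (hC2 : HypC2 F xbar A S T δbar)
    (δ : ℝ) (hδ : δ ∈ Set.Ioo 0 δbar) :
    (∀ sbar ∈ Set.Ico S T,
      Tendsto
        (fun s => ⨆ x ∈ Metric.closedBall (xbar sbar) δ, ⨆ a ∈ A,
          EMetric.hausdorffEdist (rightLim F T sbar x a) (F s x a))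
        (𝓝[Set.Ioc sbar T] sbar) (𝓝 0)) ∧
    (∀ tbar ∈ Set.Ioc S T,
      Tendsto
        (fun t => ⨆ x ∈ Metric.closedBall (xbar tbar) δ, ⨆ a ∈ A,
          EMetric.hausdorffEdist (leftLim F S tbar x a) (F t x a))
        (𝓝[Set.Ico S tbar] tbar) (𝓝 0)) := by
  constructor
  · intro sbar hsbar
    have hne : (𝓝[Set.Ioc sbar T] sbar).NeBot := by
      refine mem_closure_iff_nhdsWithin_neBot.1 ?_
      rw [closure_Ioc hsbar.2.ne]
      exact ⟨le_rfl, hsbar.2.le⟩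
    have hclaim : ∀ ε : ℝ≥0∞, 0 < ε → ε ≠ ⊤ →
        ∃ U ∈ 𝓝[Set.Ioc sbar T] sbar, ∀ s ∈ U, ∀ t ∈ U,
          ∀ x ∈ Metric.closedBall (xbar sbar) δ, ∀ a ∈ A,
            EMetric.hausdorffEdist (F t x a) (F s x a) ≤ ε := by
      intro ε hε hεt
      obtain ⟨r, hr1, hr2, hb⟩ := claimC_right F xbar A S T δbar hfin hx δ hδ sbar hsbar ε hε hεt
      refine ⟨Set.Ioc sbar T ∩ Set.Iio r,
        inter_mem self_mem_nhdsWithin (mem_nhdsWithin_of_mem_nhds (Iio_mem_nhds hr1)), ?_⟩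
      intro s hs t ht x hx' a ha
      exact hb s ⟨hs.1.1, hs.2.le⟩ t ⟨ht.1.1, ht.2.le⟩ x hx' a ha
    exact lemD F A (xbar sbar) δ (𝓝[Set.Ioc sbar T] sbar) hclaim
  · intro tbar htbar
    have hne : (𝓝[Set.Ico S tbar] tbar).NeBot := by
      refine mem_closure_iff_nhdsWithin_neBot.1 ?_
      rw [closure_Ico htbar.1.ne]
      exact ⟨htbar.1.le, le_rfl⟩
    have hclaim : ∀ ε : ℝ≥0∞, 0 < ε → ε ≠ ⊤ →
        ∃ U ∈ 𝓝[Set.Ico S tbar] tbar, ∀ s ∈ U, ∀ t ∈ U,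
          ∀ x ∈ Metric.closedBall (xbar tbar) δ, ∀ a ∈ A,
            EMetric.hausdorffEdist (F t x a) (F s x a) ≤ ε := by
      intro ε hε hεt
      obtain ⟨r, hr1, hr2, hb⟩ := claimC_left F xbar A S T δbar hfin hx δ hδ tbar htbar ε hε hεt
      refine ⟨Set.Ico S tbar ∩ Set.Ioi r,
        inter_mem self_mem_nhdsWithin (mem_nhdsWithin_of_mem_nhds (Ioi_mem_nhds hr2)), ?_⟩
      intro s hs t ht x hx' a ha
      exact hb s ⟨hs.2.le, hs.1.2⟩ t ⟨ht.2.le, ht.1.2⟩ x hx' a ha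
    exact lemD F A (xbar tbar) δ (𝓝[Set.Ico S tbar] tbar) hclaim

end
end

section
/- Let m : [S,T] × ℝⁿ → ℝ^r and x̄ : [S,T] → ℝⁿ satisfy hypotheses (BV1) and (BV2). Then the weak* limit measure μ of the discrete measures μ^j := Σ_{i=0}^{N_j−1} [m(t^j_{i+1}, ξ^j_i) − m(t^j_i, ξ^j_i)] δ_{t^j_i} does not depend on the choice of the sequence of partitions {t^j_i} (with diam({t^j_i}) → 0), of the sequence ρ^j ↓ 0, or of the collections of vectors {ξ^j_i} satisfying ξ^j_i ∈ x̄(t) + ρ^j 𝔹 for some t ∈ [t^j_i, t^j_{i+1}]: any two admissible choices yield sequences of discrete measures with the same weak* limit in C([S,T];ℝ^r)*. -/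
open Set Metric Filter MeasureTheory Pointwise
open scoped ENNReal Topology

noncomputable section

/-- A partition `{t₀ = S, t₁, …, t_N = t}` of the interval `[S, t]`. -/
structure IntervalPartition (S t : ℝ) where
  N : ℕ
  pts : ℕ → ℝ
  hN : 0 < N
  first : pts 0 = S
  last : pts N = t
  mono : ∀ i, i < N → pts i < pts (i + 1)

/-- `diam(𝒯) ≤ ε` : every subinterval of the partition has length at most `ε`. -/
def IntervalPartition.diamLE {S t : ℝ} (P : IntervalPartition S t) (ε : ℝ) : Prop :=
  ∀ i, i < P.N → P.pts (i + 1) - P.pts i ≤ ε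

/-- The sum `I^δ(𝒯) = Σᵢ sup { |m(tᵢ₊₁,x) − m(tᵢ,x)| : x ∈ x̄([tᵢ,tᵢ₊₁]) + δ𝔹 }`
for a function `m` along `x̄` (distances measured by `edist` in the target). -/
noncomputable def fSum {E α : Type*} [NormedAddCommGroup E] [PseudoEMetricSpace α]
    (m : ℝ → E → α) (xbar : ℝ → E) (δ : ℝ) {S t : ℝ} (P : IntervalPartition S t) : ℝ≥0∞ :=
  ∑ i ∈ Finset.range P.N,
    ⨆ x ∈ xbar '' Set.Icc (P.pts i) (P.pts (i + 1)) + Metric.closedBall (0 : E) δ,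
      edist (m (P.pts (i + 1)) x) (m (P.pts i) x)

/-- The `(δ,ε)`-perturbed cumulative variation function `η^δ_ε(t)` of `m(·,x)` along
`x̄`: the supremum of `I^δ(𝒯)` over partitions `𝒯` of `[S,t]` with `diam(𝒯) ≤ ε`. -/
noncomputable def fEtaEps {E α : Type*} [NormedAddCommGroup E] [PseudoEMetricSpace α]
    (m : ℝ → E → α) (xbar : ℝ → E) (δ ε : ℝ) (S t : ℝ) : ℝ≥0∞ :=
  ⨆ (P : IntervalPartition S t) (_ : P.diamLE ε), fSum m xbar δ P

/-- The `δ`-perturbed cumulative variation function `η^δ(t) = lim_{ε↓0} η^δ_ε(t)`. -/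
noncomputable def fEtaDelta {E α : Type*} [NormedAddCommGroup E] [PseudoEMetricSpace α]
    (m : ℝ → E → α) (xbar : ℝ → E) (δ : ℝ) (S t : ℝ) : ℝ≥0∞ :=
  ⨅ (ε : ℝ) (_ : 0 < ε), fEtaEps m xbar δ ε S t

/-- The cumulative variation function `η(t) = lim_{δ↓0} η^δ(t)` of `m(·,x)` along `x̄`. -/
noncomputable def fEta {E α : Type*} [NormedAddCommGroup E] [PseudoEMetricSpace α]
    (m : ℝ → E → α) (xbar : ℝ → E) (S t : ℝ) : ℝ≥0∞ :=
  ⨅ (δ : ℝ) (_ : 0 < δ), fEtaDelta m xbar δ S t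

/-- `m(·,x)` has bounded variation along `x̄` on `[S,T]` : `η(T) < ∞`. -/
def FunHasBVAlong {E α : Type*} [NormedAddCommGroup E] [PseudoEMetricSpace α]
    (m : ℝ → E → α) (xbar : ℝ → E) (S T : ℝ) : Prop :=
  fEta m xbar S T < ⊤

/-- Hypothesis (BV1): `x̄` is continuous and, for some `δ' > 0`, `m(t,·)` is
continuously differentiable on the interior of `x̄(t) + δ'𝔹` for all `t ∈ [S,T]`. -/
def HypBV1 {n r : ℕ} (m : ℝ → En n → En r) (xbar : ℝ → En n) (S T δ' : ℝ) : Prop :=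
  ContinuousOn xbar (Set.Icc S T) ∧ 0 < δ' ∧
    ∀ t ∈ Set.Icc S T, ContDiffOn ℝ 1 (m t) (Metric.ball (xbar t) δ')

/-- Hypothesis (BV2): both `m(·,x)` and `∇ₓm(·,x)` have bounded variation along `x̄`. -/
def HypBV2 {n r : ℕ} (m : ℝ → En n → En r) (xbar : ℝ → En n) (S T : ℝ) : Prop :=
  FunHasBVAlong m xbar S T ∧
    FunHasBVAlong (fun t x => fderiv ℝ (m t) x) xbar S T

/-- The pairing `∫ g·dμʲ = Σᵢ ⟨g(tᵢ), m(tᵢ₊₁,ξᵢ) − m(tᵢ,ξᵢ)⟩` of a continuous function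
`g` with the discrete `ℝʳ`-valued measure `μʲ = Σᵢ [m(tᵢ₊₁,ξᵢ) − m(tᵢ,ξᵢ)] δ_{tᵢ}`. -/
noncomputable def discretePairing {n r : ℕ} (m : ℝ → En n → En r) {S T : ℝ}
    (P : IntervalPartition S T) (ξ : ℕ → En n) (g : ℝ → En r) : ℝ :=
  ∑ i ∈ Finset.range P.N, ∑ l : Fin r,
    g (P.pts i) l * (m (P.pts (i + 1)) (ξ i) l - m (P.pts i) (ξ i) l)

/-- The integral `∫ f dμ` of a real function against a signed Borel measure,
via the Jordan decomposition. -/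
noncomputable def signedIntegral (μ : MeasureTheory.SignedMeasure ℝ) (f : ℝ → ℝ) : ℝ :=
  (∫ t, f t ∂μ.toJordanDecomposition.posPart) -
    ∫ t, f t ∂μ.toJordanDecomposition.negPart

/-- The pairing `∫ g·dμ = Σ_l ∫ g_l dμ_l` of a continuous function with an
`ℝʳ`-valued Borel measure `μ` (given through its `r` signed components). -/
noncomputable def signedPairing {r : ℕ} (μ : Fin r → MeasureTheory.SignedMeasure ℝ)
    (g : ℝ → En r) : ℝ :=
  ∑ l : Fin r, signedIntegral (μ l) fun t => g t l

/-- `μ` (an `ℝʳ`-valued Borel measure on `[S,T]`, given through its signed components)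
is the partial variation measure `B ↦ ∫_B d_t m(t,x̄(t))` of `m(·,x)` along `x̄`:
it is supported on `[S,T]` and is the weak* limit of the discrete measures
`μʲ = Σᵢ [m(tʲᵢ₊₁,ξʲᵢ) − m(tʲᵢ,ξʲᵢ)] δ_{tʲᵢ}`, for every sequence of partitions of
`[S,T]` with diameters tending to `0` and points `ξʲᵢ = x̄(t)`, `t ∈ [tʲᵢ,tʲᵢ₊₁]`. -/
def IsPartialVariationMeasure {n r : ℕ} (m : ℝ → En n → En r) (xbar : ℝ → En n)
    (S T : ℝ) (μ : Fin r → MeasureTheory.SignedMeasure ℝ) : Prop :=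
  (∀ l, (μ l).restrict (Set.Icc S T)ᶜ = 0) ∧
  ∀ (P : ℕ → IntervalPartition S T) (ξ : ℕ → ℕ → En n),
    (∀ ε : ℝ, 0 < ε → ∃ J : ℕ, ∀ j ≥ J, (P j).diamLE ε) →
    (∀ j i, i < (P j).N →
      ∃ t ∈ Set.Icc ((P j).pts i) ((P j).pts (i + 1)), ξ j i = xbar t) →
    ∀ g : ℝ → En r, Continuous g →
      Tendsto (fun j => discretePairing m (P j) (ξ j) g) atTop (𝓝 (signedPairing μ g))


namespace S13

open Set Metric Filter MeasureTheory Pointwise Finset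
open scoped ENNReal Topology

variable {S T : ℝ}

lemma pts_mono (P : IntervalPartition S T) {i j : ℕ} (hij : i ≤ j) (hj : j ≤ P.N) :
    P.pts i ≤ P.pts j := by
  induction j with
  | zero => simp_all
  | succ n ih =>
    rcases Nat.eq_or_lt_of_le hij with h | h
    · simp [h]
    · exact (ih (Nat.lt_succ_iff.mp h) (le_of_lt hj)).trans
        (le_of_lt (P.mono n (Nat.lt_of_succ_le hj)))

lemma pts_mem (P : IntervalPartition S T) {i : ℕ} (hi : i ≤ P.N) : P.pts i ∈ Set.Icc S T := by
  constructor
  · have := pts_mono P (Nat.zero_le i) hi; rwa [P.first] at this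
  · have := pts_mono P hi le_rfl; rwa [P.last] at this

/-- `R` refines `P` via index map `κ`. -/
def IsRefinement (R P : IntervalPartition S T) (κ : ℕ → ℕ) : Prop :=
  κ 0 = 0 ∧ κ P.N = R.N ∧ (∀ i, i < P.N → κ i < κ (i + 1)) ∧
    ∀ i, i ≤ P.N → R.pts (κ i) = P.pts i

lemma kappa_mono {κ : ℕ → ℕ} {N : ℕ} (h : ∀ i, i < N → κ i < κ (i + 1))
    {i j : ℕ} (hij : i ≤ j) (hj : j ≤ N) : κ i ≤ κ j := by
  induction j with
  | zero => simp_all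
  | succ n ih =>
    rcases Nat.eq_or_lt_of_le hij with h' | h'
    · simp [h']
    · exact (ih (Nat.lt_succ_iff.mp h') (le_of_lt hj)).trans
        (le_of_lt (h n (Nat.lt_of_succ_le hj)))

lemma exists_containing_aux (κ : ℕ → ℕ) (h0 : κ 0 = 0) :
    ∀ N k, k < κ N → ∃ i, i < N ∧ κ i ≤ k ∧ k < κ (i + 1) := by
  intro N
  induction N with
  | zero => intro k hk; omega
  | succ n ih =>
    intro k hk
    by_cases hc : κ n ≤ k
    · exact ⟨n, Nat.lt_succ_self n, hc, hk⟩
    · obtain ⟨i, hi, h1, h2⟩ := ih k (by omega)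
      exact ⟨i, by omega, h1, h2⟩

lemma exists_containing {R P : IntervalPartition S T} {κ : ℕ → ℕ}
    (h : IsRefinement R P κ) {k : ℕ} (hk : k < R.N) :
    ∃ i, i < P.N ∧ κ i ≤ k ∧ k < κ (i + 1) :=
  exists_containing_aux κ h.1 P.N k (h.2.1 ▸ hk)

/-- interval of `R` is inside the corresponding interval of `P`. -/
lemma interval_subset {R P : IntervalPartition S T} {κ : ℕ → ℕ}
    (h : IsRefinement R P κ) {i k : ℕ} (hi : i < P.N) (h1 : κ i ≤ k) (h2 : k < κ (i+1)) :
    P.pts i ≤ R.pts k ∧ R.pts (k + 1) ≤ P.pts (i + 1) ∧ k < R.N := by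
  have hkR : k < R.N := by
    rw [← h.2.1]
    exact lt_of_lt_of_le h2 (kappa_mono h.2.2.1 hi le_rfl)
  refine ⟨?_, ?_, hkR⟩
  · rw [← h.2.2.2 i (le_of_lt hi)]; exact pts_mono R h1 (le_of_lt hkR)
  · rw [← h.2.2.2 (i + 1) hi]
    exact pts_mono R h2 (by rw [← h.2.1]; exact kappa_mono h.2.2.1 hi le_rfl)

lemma IsRefinement.diamLE {R P : IntervalPartition S T} {κ : ℕ → ℕ}
    (h : IsRefinement R P κ) {ε : ℝ} (hP : P.diamLE ε) : R.diamLE ε := by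
  intro k hk
  obtain ⟨i, hi, h1, h2⟩ := exists_containing h hk
  obtain ⟨e1, e2, -⟩ := interval_subset h hi h1 h2
  have := hP i hi
  linarith

/-- Construction of the common refinement. -/
lemma exists_common_refinement (P P' : IntervalPartition S T) (hST : S < T) :
    ∃ R : IntervalPartition S T, ∃ κ κ' : ℕ → ℕ,
      IsRefinement R P κ ∧ IsRefinement R P' κ' := by
  classical
  set F : Finset ℝ :=
    ((Finset.range (P.N + 1)).image P.pts) ∪ ((Finset.range (P'.N + 1)).image P'.pts) with hF
  have hS : S ∈ F := by
    simp only [hF, Finset.mem_union, Finset.mem_image]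
    exact Or.inl ⟨0, by simp [P.first]⟩
  have hT : T ∈ F := by
    simp only [hF, Finset.mem_union, Finset.mem_image]
    exact Or.inl ⟨P.N, by simp [P.last]⟩
  have hSle : ∀ x ∈ F, S ≤ x ∧ x ≤ T := by
    intro x hx
    simp only [hF, Finset.mem_union, Finset.mem_image, Finset.mem_range] at hx
    rcases hx with ⟨i, hi, rfl⟩ | ⟨i, hi, rfl⟩
    · exact ⟨(pts_mem P (by omega)).1, (pts_mem P (by omega)).2⟩
    · exact ⟨(pts_mem P' (by omega)).1, (pts_mem P' (by omega)).2⟩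
  have hcard : 2 ≤ F.card := by
    have : ({S, T} : Finset ℝ) ⊆ F := by
      intro x hx; simp at hx; rcases hx with rfl | rfl <;> assumption
    calc 2 = ({S, T} : Finset ℝ).card := by
          rw [Finset.card_insert_of_notMem (by simp [ne_of_lt hST]), Finset.card_singleton]
    _ ≤ F.card := Finset.card_le_card this
  set NR : ℕ := F.card - 1 with hNR
  have hFcard : F.card = NR + 1 := by omega
  set e := F.orderIsoOfFin hFcard with he
  set pts : ℕ → ℝ := fun k => if h : k < NR + 1 then (e ⟨k, h⟩ : ℝ) else T + k with hpts
  have hptseq : ∀ k (h : k < NR + 1), pts k = (e ⟨k, h⟩ : ℝ) := by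
    intro k h; simp [hpts, h, Nat.lt_succ_iff.mp h]
  have hmonoR : ∀ k, k < NR → pts k < pts (k + 1) := by
    intro k hk
    rw [hptseq k (by omega), hptseq (k+1) (by omega)]
    exact_mod_cast e.strictMono (by simp [Fin.lt_def])
  have hfirst : pts 0 = S := by
    rw [hptseq 0 (by omega)]
    have h1 : (e ⟨0, by omega⟩ : ℝ) ≤ S := by
      obtain ⟨k, hk⟩ := e.surjective ⟨S, hS⟩
      calc (e ⟨0, by omega⟩ : ℝ) ≤ (e k : ℝ) := by exact_mod_cast e.monotone (Fin.zero_le k)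
      _ = S := by rw [hk]
    exact le_antisymm h1 (hSle _ (e ⟨0, by omega⟩).2).1
  have hlast : pts NR = T := by
    rw [hptseq NR (by omega)]
    have h1 : T ≤ (e ⟨NR, by omega⟩ : ℝ) := by
      obtain ⟨k, hk⟩ := e.surjective ⟨T, hT⟩
      calc T = (e k : ℝ) := by rw [hk]
      _ ≤ _ := by exact_mod_cast e.monotone (Fin.le_last k)
    exact le_antisymm (hSle _ (e ⟨NR, by omega⟩).2).2 h1
  set R : IntervalPartition S T := ⟨NR, pts, by omega, hfirst, hlast, hmonoR⟩ with hR
  have key : ∀ Q : IntervalPartition S T,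
      (∀ i, i ≤ Q.N → Q.pts i ∈ F) → ∃ κ, IsRefinement R Q κ := by
    intro Q hQ
    have hidx : ∀ i, i ≤ Q.N → ∃ k, k ≤ NR ∧ pts k = Q.pts i := by
      intro i hi
      obtain ⟨k, hk⟩ := e.surjective ⟨Q.pts i, hQ i hi⟩
      exact ⟨k, by omega, by rw [hptseq k k.2]; exact (congrArg Subtype.val hk :)⟩
    choose κ hκ1 hκ2 using hidx
    set κf : ℕ → ℕ := fun i => if h : i ≤ Q.N then κ i h else NR with hκf
    have hκfeq : ∀ i (h : i ≤ Q.N), κf i = κ i h := fun i h => by simp [hκf, h]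
    have hptsmono : ∀ k l, k ≤ l → l ≤ NR → pts k ≤ pts l := fun k l h1 h2 => pts_mono R h1 h2
    have hptsStrict : ∀ k l, k < l → l ≤ NR → pts k < pts l := by
      intro k l hkl hl
      calc pts k < pts (k+1) := hmonoR k (by omega)
      _ ≤ pts l := hptsmono _ _ (by omega) hl
    refine ⟨κf, ?_, ?_, ?_, ?_⟩
    · rw [hκfeq 0 (Nat.zero_le _)]
      by_contra hne
      have h0 : 0 < κ 0 (Nat.zero_le _) := Nat.pos_of_ne_zero hne
      have := hptsStrict 0 _ h0 (hκ1 0 (Nat.zero_le _))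
      rw [hκ2 0 (Nat.zero_le _), hfirst, Q.first] at this
      exact lt_irrefl _ this
    · rw [hκfeq Q.N le_rfl]
      by_contra hne
      have h0 : κ Q.N le_rfl < NR := lt_of_le_of_ne (hκ1 Q.N le_rfl) hne
      have := hptsStrict _ NR h0 le_rfl
      rw [hκ2 Q.N le_rfl, hlast, Q.last] at this
      exact lt_irrefl _ this
    · intro i hi
      rw [hκfeq i (le_of_lt hi), hκfeq (i+1) hi]
      by_contra hc
      push_neg at hc
      have := hptsmono _ _ hc (hκ1 i (le_of_lt hi))
      rw [hκ2 i (le_of_lt hi), hκ2 (i+1) hi] at this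
      exact absurd (Q.mono i hi) (not_lt.mpr this)
    · intro i hi
      rw [hκfeq i hi]
      exact hκ2 i hi
  obtain ⟨κ, hκ⟩ := key P (fun i hi => by
    simp only [hF, Finset.mem_union, Finset.mem_image, Finset.mem_range]
    exact Or.inl ⟨i, by omega, rfl⟩)
  obtain ⟨κ', hκ'⟩ := key P' (fun i hi => by
    simp only [hF, Finset.mem_union, Finset.mem_image, Finset.mem_range]
    exact Or.inr ⟨i, by omega, rfl⟩)
  exact ⟨R, κ, κ', hκ, hκ'⟩

lemma sum_Ico_kappa {M : Type*} [AddCommMonoid M] (κ : ℕ → ℕ) (N : ℕ)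
    (hmono : ∀ i, i < N → κ i < κ (i + 1)) (f : ℕ → M) :
    ∑ i ∈ Finset.range N, ∑ k ∈ Finset.Ico (κ i) (κ (i + 1)), f k
      = ∑ k ∈ Finset.Ico (κ 0) (κ N), f k := by
  induction N with
  | zero => simp
  | succ n ih =>
    rw [Finset.sum_range_succ, ih (fun i hi => hmono i (by omega))]
    exact Finset.sum_Ico_consecutive _
      (kappa_mono (fun i hi => hmono i (by omega)) (Nat.zero_le n) le_rfl)
      (le_of_lt (hmono n (by omega)))

lemma sum_Ico_telescope {M : Type*} [AddCommGroup M] (f : ℕ → M) {a b : ℕ} (h : a ≤ b) :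
    ∑ k ∈ Finset.Ico a b, (f (k + 1) - f k) = f b - f a := by
  rw [Finset.sum_Ico_eq_sub _ h, Finset.sum_range_sub, Finset.sum_range_sub]; abel

end S13
namespace S13

variable {E α : Type*} [NormedAddCommGroup E] [PseudoEMetricSpace α]
variable {m : ℝ → E → α} {xbar : ℝ → E} {S T : ℝ}

lemma diamLE_mono {P : IntervalPartition S T} {ε ε' : ℝ} (h : P.diamLE ε) (hεε' : ε ≤ ε') :
    P.diamLE ε' := fun i hi => (h i hi).trans hεε'

lemma fSum_le_fEtaEps {δ ε : ℝ} {P : IntervalPartition S T} (hP : P.diamLE ε) :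
    fSum m xbar δ P ≤ fEtaEps m xbar δ ε S T :=
  le_iSup₂ (f := fun (P : IntervalPartition S T) (_ : P.diamLE ε) => fSum m xbar δ P) P hP

lemma fSum_mono_delta {δ δ' : ℝ} (hδ : δ ≤ δ') (P : IntervalPartition S T) :
    fSum m xbar δ P ≤ fSum m xbar δ' P := by
  apply Finset.sum_le_sum
  intro i _
  apply iSup_le_iSup_of_subset
  exact Set.add_subset_add_left (Metric.closedBall_subset_closedBall hδ)

lemma fEtaEps_mono_eps {δ ε ε' : ℝ} (hεε' : ε ≤ ε') :
    fEtaEps m xbar δ ε S T ≤ fEtaEps m xbar δ ε' S T := by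
  apply iSup₂_le
  intro P hP
  exact fSum_le_fEtaEps (diamLE_mono hP hεε')

lemma exists_finite_fEtaEps (h : FunHasBVAlong m xbar S T) :
    ∃ δ > 0, ∃ ε > 0, fEtaEps m xbar δ ε S T < ⊤ := by
  rw [FunHasBVAlong, fEta] at h
  by_contra hc
  push_neg at hc
  have h1 : ∀ δ : ℝ, 0 < δ → fEtaDelta m xbar δ S T = ⊤ := by
    intro δ hδ
    rw [fEtaDelta, iInf_eq_top]
    intro ε
    rw [iInf_eq_top]
    intro hε
    exact top_le_iff.mp (hc δ hδ ε hε)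
  have : (⨅ (δ : ℝ) (_ : 0 < δ), fEtaDelta m xbar δ S T) = ⊤ := by
    rw [iInf_eq_top]; intro δ; rw [iInf_eq_top]; intro hδ; exact h1 δ hδ
  rw [this] at h
  exact lt_irrefl _ h

/-- in the tube, the edist of increments is at most the `fSum` summand. -/
lemma edist_le_summand {δ : ℝ} {P : IntervalPartition S T} {k : ℕ} {x : E}
    (hx : x ∈ xbar '' Set.Icc (P.pts k) (P.pts (k + 1)) + Metric.closedBall (0 : E) δ) :
    edist (m (P.pts (k + 1)) x) (m (P.pts k) x)
      ≤ ⨆ y ∈ xbar '' Set.Icc (P.pts k) (P.pts (k + 1)) + Metric.closedBall (0 : E) δ,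
          edist (m (P.pts (k + 1)) y) (m (P.pts k) y) :=
  le_iSup₂ (f := fun y (_ : y ∈ _) => edist (m (P.pts (k + 1)) y) (m (P.pts k) y)) x hx

lemma summand_le_fSum {δ : ℝ} {P : IntervalPartition S T} {k : ℕ} (hk : k < P.N) :
    (⨆ y ∈ xbar '' Set.Icc (P.pts k) (P.pts (k + 1)) + Metric.closedBall (0 : E) δ,
        edist (m (P.pts (k + 1)) y) (m (P.pts k) y)) ≤ fSum m xbar δ P :=
  Finset.single_le_sum (f := fun k => ⨆ y ∈ xbar '' Set.Icc (P.pts k) (P.pts (k + 1)) +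
      Metric.closedBall (0 : E) δ, edist (m (P.pts (k + 1)) y) (m (P.pts k) y))
    (fun _ _ => zero_le) (Finset.mem_range.mpr hk)

end S13
namespace S13

open Set Metric Filter MeasureTheory Pointwise Finset
open scoped ENNReal Topology RealInnerProductSpace

variable {n r : ℕ} {S T : ℝ}

lemma pairing_refine (m : ℝ → En n → En r) {P R : IntervalPartition S T} {κ : ℕ → ℕ}
    (href : IsRefinement R P κ) (ξ : ℕ → En n) (g : ℝ → En r) :
    discretePairing m P ξ g =
      ∑ i ∈ Finset.range P.N, ∑ k ∈ Finset.Ico (κ i) (κ (i + 1)), ∑ l : Fin r,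
        g (P.pts i) l * (m (R.pts (k + 1)) (ξ i) l - m (R.pts k) (ξ i) l) := by
  apply Finset.sum_congr rfl
  intro i hi
  rw [Finset.mem_range] at hi
  rw [Finset.sum_comm]
  apply Finset.sum_congr rfl
  intro l _
  rw [← Finset.mul_sum, sum_Ico_telescope (fun k => m (R.pts k) (ξ i) l)
    (le_of_lt (href.2.2.1 i hi)), href.2.2.2 i (le_of_lt hi), href.2.2.2 (i + 1) hi]

lemma pairing_decomp (m : ℝ → En n → En r) {P R : IntervalPartition S T} {κ : ℕ → ℕ}
    (href : IsRefinement R P κ) (ζ : ℕ → En n) (g : ℝ → En r) :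
    discretePairing m R ζ g =
      ∑ i ∈ Finset.range P.N, ∑ k ∈ Finset.Ico (κ i) (κ (i + 1)), ∑ l : Fin r,
        g (R.pts k) l * (m (R.pts (k + 1)) (ζ k) l - m (R.pts k) (ζ k) l) := by
  rw [discretePairing, sum_Ico_kappa κ P.N href.2.2.1, href.1, href.2.1,
    ← Finset.range_eq_Ico]

lemma inner_sum_eq {r : ℕ} (a v : En r) : ∑ l, a l * v l = ⟪a, v⟫ := by
  simp [PiLp.inner_apply, RCLike.inner_apply, conj_trivial, mul_comm]

lemma pair_bound {r : ℕ} (a b u v : En r) :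
    |⟪a, u⟫ - ⟪b, v⟫| ≤ ‖a - b‖ * ‖u‖ + ‖b‖ * ‖u - v‖ := by
  have h : ⟪a, u⟫ - ⟪b, v⟫ = ⟪a - b, u⟫ + ⟪b, u - v⟫ := by
    rw [inner_sub_left, inner_sub_right]; ring
  rw [h]
  calc |⟪a - b, u⟫ + ⟪b, u - v⟫| ≤ |⟪a - b, u⟫| + |⟪b, u - v⟫| := abs_add_le _ _
  _ ≤ ‖a - b‖ * ‖u‖ + ‖b‖ * ‖u - v‖ :=
      add_le_add (abs_real_inner_le_norm _ _) (abs_real_inner_le_norm _ _)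

/-- The key estimate: the pairing along a tagged partition is close to the pairing
along any refinement tagged by curve points at left endpoints. -/
lemma key_estimate (m : ℝ → En n → En r) (xbar : ℝ → En n) {δ' : ℝ}
    (hBV1 : HypBV1 m xbar S T δ')
    {δ0 ε0 : ℝ} (hδ0 : 0 < δ0) (hε0 : 0 < ε0)
    {C1 C2 : ℝ≥0∞} (hC1 : C1 ≠ ⊤) (hC2 : C2 ≠ ⊤)
    (hC1b : fEtaEps m xbar δ0 ε0 S T ≤ C1)
    (hC2b : fEtaEps (fun t x => fderiv ℝ (m t) x) xbar δ0 ε0 S T ≤ C2)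
    (g : ℝ → En r) {G : ℝ} (hG : ∀ t ∈ Set.Icc S T, ‖g t‖ ≤ G) (hG0 : 0 ≤ G)
    {θg θx ρ ε : ℝ} (hθg : 0 ≤ θg) (hθx : 0 < θx) (hρ : 0 ≤ ρ) (hε : 0 < ε)
    (hεε0 : ε ≤ ε0)
    (hgmod : ∀ s t, s ∈ Set.Icc S T → t ∈ Set.Icc S T → |s - t| ≤ ε → ‖g s - g t‖ ≤ θg)
    (hxmod : ∀ s t, s ∈ Set.Icc S T → t ∈ Set.Icc S T → |s - t| ≤ ε →
      ‖xbar s - xbar t‖ ≤ θx)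
    (hsize1 : ρ + θx ≤ δ0) (hsize2 : ρ + 2 * θx < δ')
    {P R : IntervalPartition S T} {κ : ℕ → ℕ} (href : IsRefinement R P κ) (hPd : P.diamLE ε)
    (ξ : ℕ → En n)
    (hξ : ∀ i, i < P.N → ∃ τ ∈ Set.Icc (P.pts i) (P.pts (i + 1)),
        ξ i ∈ Metric.closedBall (xbar τ) ρ) :
    |discretePairing m P ξ g - discretePairing m R (fun k => xbar (R.pts k)) g|
      ≤ θg * C1.toReal + G * (ρ + θx) * C2.toReal := by
  have hRd : R.diamLE ε := href.diamLE hPd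
  -- the fSum summands for m and for the derivative
  set Mt : ℕ → ℝ≥0∞ := fun k =>
    ⨆ x ∈ xbar '' Set.Icc (R.pts k) (R.pts (k + 1)) + Metric.closedBall (0 : En n) δ0,
      edist (m (R.pts (k + 1)) x) (m (R.pts k) x) with hMt
  set Dt : ℕ → ℝ≥0∞ := fun k =>
    ⨆ x ∈ xbar '' Set.Icc (R.pts k) (R.pts (k + 1)) + Metric.closedBall (0 : En n) δ0,
      edist (fderiv ℝ (m (R.pts (k + 1))) x) (fderiv ℝ (m (R.pts k)) x) with hDt
  have hMtsum : ∑ k ∈ Finset.range R.N, Mt k = fSum m xbar δ0 R := rfl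
  have hDtsum : ∑ k ∈ Finset.range R.N, Dt k
      = fSum (fun t x => fderiv ℝ (m t) x) xbar δ0 R := rfl
  have hfSum1 : fSum m xbar δ0 R ≤ C1 := (fSum_le_fEtaEps (diamLE_mono hRd hεε0)).trans hC1b
  have hfSum2 : fSum (fun t x => fderiv ℝ (m t) x) xbar δ0 R ≤ C2 :=
    (fSum_le_fEtaEps (diamLE_mono hRd hεε0)).trans hC2b
  have hMtne : ∀ k, k < R.N → Mt k ≠ ⊤ := fun k hk =>
    ne_top_of_le_ne_top hC1 ((summand_le_fSum hk).trans hfSum1)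
  have hDtne : ∀ k, k < R.N → Dt k ≠ ⊤ := fun k hk =>
    ne_top_of_le_ne_top hC2 ((summand_le_fSum hk).trans hfSum2)
  -- rewrite both pairings over the refinement
  rw [pairing_refine m href ξ g, pairing_decomp m href _ g]
  have hsplit : (∑ i ∈ Finset.range P.N, ∑ k ∈ Finset.Ico (κ i) (κ (i + 1)), ∑ l : Fin r,
        g (P.pts i) l * (m (R.pts (k + 1)) (ξ i) l - m (R.pts k) (ξ i) l)) -
      (∑ i ∈ Finset.range P.N, ∑ k ∈ Finset.Ico (κ i) (κ (i + 1)), ∑ l : Fin r,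
        g (R.pts k) l * (m (R.pts (k + 1)) (xbar (R.pts k)) l
          - m (R.pts k) (xbar (R.pts k)) l)) =
      ∑ i ∈ Finset.range P.N, ∑ k ∈ Finset.Ico (κ i) (κ (i + 1)),
        ((∑ l : Fin r, g (P.pts i) l * (m (R.pts (k + 1)) (ξ i) l - m (R.pts k) (ξ i) l)) -
          ∑ l : Fin r, g (R.pts k) l *
            (m (R.pts (k + 1)) (xbar (R.pts k)) l - m (R.pts k) (xbar (R.pts k)) l)) := by
    rw [← Finset.sum_sub_distrib]
    exact Finset.sum_congr rfl fun i _ => (Finset.sum_sub_distrib _ _).symm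
  rw [hsplit]
  -- bound the per-term differences
  have key : ∀ i ∈ Finset.range P.N, ∀ k ∈ Finset.Ico (κ i) (κ (i + 1)),
      |(∑ l : Fin r, g (P.pts i) l * (m (R.pts (k + 1)) (ξ i) l - m (R.pts k) (ξ i) l)) -
        ∑ l : Fin r, g (R.pts k) l *
          (m (R.pts (k + 1)) (xbar (R.pts k)) l - m (R.pts k) (xbar (R.pts k)) l)|
        ≤ θg * (Mt k).toReal + G * (ρ + θx) * (Dt k).toReal := by
    intro i hi k hk
    rw [Finset.mem_range] at hi
    rw [Finset.mem_Ico] at hk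
    obtain ⟨hA, hB, hkR⟩ := interval_subset href hi hk.1 hk.2
    obtain ⟨τ, hτ, hξB⟩ := hξ i hi
    set ti := P.pts i
    set sk := R.pts k
    set sk1 := R.pts (k + 1)
    have hsklt : sk < sk1 := R.mono k hkR
    have htiI : ti ∈ Set.Icc S T := pts_mem P (le_of_lt hi)
    have hskI : sk ∈ Set.Icc S T := pts_mem R (le_of_lt hkR)
    have hsk1I : sk1 ∈ Set.Icc S T := pts_mem R hkR
    have hτI : τ ∈ Set.Icc S T :=
      ⟨htiI.1.trans hτ.1, hτ.2.trans (pts_mem P hi).2⟩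
    have hlen : P.pts (i + 1) - ti ≤ ε := hPd i hi
    have hsk2 : sk ≤ P.pts (i + 1) := le_of_lt (lt_of_lt_of_le hsklt hB)
    have hd1 : |ti - sk| ≤ ε := by rw [abs_le]; constructor <;> linarith
    have hd2 : |τ - sk| ≤ ε := by
      obtain ⟨hτ1, hτ2⟩ := hτ
      rw [abs_le]; constructor <;> linarith
    have hd3 : |sk - sk1| ≤ ε := by
      have := hRd k hkR; rw [abs_le]; constructor <;> linarith
    -- distance of the tag to the curve point at sk
    have hξsk : dist (ξ i) (xbar sk) ≤ ρ + θx := by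
      calc dist (ξ i) (xbar sk) ≤ dist (ξ i) (xbar τ) + dist (xbar τ) (xbar sk) :=
            dist_triangle _ _ _
      _ ≤ ρ + θx := add_le_add (mem_closedBall.mp hξB)
            (by rw [dist_eq_norm]; exact hxmod τ sk hτI hskI hd2)
    -- tube membership
    have htube : ∀ x : En n, dist x (xbar sk) ≤ ρ + θx →
        x ∈ xbar '' Set.Icc sk sk1 + Metric.closedBall (0 : En n) δ0 := by
      intro x hx
      rw [Set.mem_add]
      refine ⟨xbar sk, ⟨sk, ⟨le_rfl, le_of_lt hsklt⟩, rfl⟩, x - xbar sk, ?_, by abel⟩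
      rw [mem_closedBall, dist_zero_right, ← dist_eq_norm]
      exact hx.trans hsize1
    -- differentiability on the ball
    set B : Set (En n) := Metric.closedBall (xbar sk) (ρ + θx) with hBdef
    have hdiff : ∀ t₀, t₀ ∈ Set.Icc S T → dist (xbar sk) (xbar t₀) ≤ θx →
        ∀ x ∈ B, DifferentiableAt ℝ (m t₀) x := by
      intro t₀ ht₀ hdx x hx
      rw [hBdef, mem_closedBall] at hx
      have hxball : x ∈ Metric.ball (xbar t₀) δ' := by
        rw [mem_ball]
        calc dist x (xbar t₀) ≤ dist x (xbar sk) + dist (xbar sk) (xbar t₀) :=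
              dist_triangle _ _ _
        _ ≤ (ρ + θx) + θx := add_le_add hx hdx
        _ < δ' := by linarith
      exact ((hBV1.2.2 t₀ ht₀).contDiffAt (isOpen_ball.mem_nhds hxball)).differentiableAt
        one_ne_zero
    have hdiffsk : ∀ x ∈ B, DifferentiableAt ℝ (m sk) x :=
      hdiff sk hskI (by simp [le_of_lt hθx])
    have hdiffsk1 : ∀ x ∈ B, DifferentiableAt ℝ (m sk1) x :=
      hdiff sk1 hsk1I (by rw [dist_eq_norm]; exact hxmod sk sk1 hskI hsk1I hd3)
    -- fderiv bound on the ball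
    have hDbound : ∀ x ∈ B, ‖fderiv ℝ (fun y => m sk1 y - m sk y) x‖ ≤ (Dt k).toReal := by
      intro x hx
      rw [fderiv_fun_sub (hdiffsk1 x hx) (hdiffsk x hx)]
      rw [← dist_eq_norm, dist_edist]
      refine ENNReal.toReal_mono (hDtne k hkR) ?_
      exact edist_le_summand (m := fun t x => fderiv ℝ (m t) x)
        (htube x (mem_closedBall.mp hx))
    -- mean value inequality
    have hmvt : ‖(m sk1 (ξ i) - m sk (ξ i)) - (m sk1 (xbar sk) - m sk (xbar sk))‖
        ≤ (Dt k).toReal * (ρ + θx) := by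
      have hcenter : xbar sk ∈ B := by
        rw [hBdef, mem_closedBall, dist_self]; positivity
      have hξB' : ξ i ∈ B := by rw [hBdef, mem_closedBall]; exact hξsk
      have := Convex.norm_image_sub_le_of_norm_fderiv_le
        (fun x hx => (hdiffsk1 x hx).sub (hdiffsk x hx)) hDbound
        (convex_closedBall _ _) hcenter hξB'
      calc ‖(m sk1 (ξ i) - m sk (ξ i)) - (m sk1 (xbar sk) - m sk (xbar sk))‖
          ≤ (Dt k).toReal * ‖ξ i - xbar sk‖ := this
      _ ≤ (Dt k).toReal * (ρ + θx) := by
          refine mul_le_mul_of_nonneg_left ?_ ENNReal.toReal_nonneg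
          rw [← dist_eq_norm]; exact hξsk
    -- norm of the increment
    have hnu : ‖m sk1 (ξ i) - m sk (ξ i)‖ ≤ (Mt k).toReal := by
      rw [← dist_eq_norm, dist_edist]
      exact ENNReal.toReal_mono (hMtne k hkR) (edist_le_summand (htube _ hξsk))
    -- put things together
    have e1 : (∑ l : Fin r, g ti l * (m sk1 (ξ i) l - m sk (ξ i) l))
        = ⟪g ti, m sk1 (ξ i) - m sk (ξ i)⟫ := by
      rw [← inner_sum_eq]; apply Finset.sum_congr rfl; intro l _; simp
    have e2 : (∑ l : Fin r, g sk l * (m sk1 (xbar sk) l - m sk (xbar sk) l))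
        = ⟪g sk, m sk1 (xbar sk) - m sk (xbar sk)⟫ := by
      rw [← inner_sum_eq]; apply Finset.sum_congr rfl; intro l _; simp
    rw [e1, e2]
    calc |⟪g ti, m sk1 (ξ i) - m sk (ξ i)⟫ - ⟪g sk, m sk1 (xbar sk) - m sk (xbar sk)⟫|
        ≤ ‖g ti - g sk‖ * ‖m sk1 (ξ i) - m sk (ξ i)‖ +
          ‖g sk‖ * ‖(m sk1 (ξ i) - m sk (ξ i)) - (m sk1 (xbar sk) - m sk (xbar sk))‖ :=
          pair_bound _ _ _ _
    _ ≤ θg * (Mt k).toReal + G * ((Dt k).toReal * (ρ + θx)) := by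
        refine add_le_add (mul_le_mul (hgmod ti sk htiI hskI hd1) hnu (norm_nonneg _) hθg)
          (mul_le_mul (hG sk hskI) hmvt (norm_nonneg _) hG0)
    _ = θg * (Mt k).toReal + G * (ρ + θx) * (Dt k).toReal := by ring
  -- sum up
  calc |∑ i ∈ Finset.range P.N, ∑ k ∈ Finset.Ico (κ i) (κ (i + 1)),
        ((∑ l : Fin r, g (P.pts i) l * (m (R.pts (k + 1)) (ξ i) l - m (R.pts k) (ξ i) l)) -
          ∑ l : Fin r, g (R.pts k) l *
            (m (R.pts (k + 1)) (xbar (R.pts k)) l - m (R.pts k) (xbar (R.pts k)) l))|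
      ≤ ∑ i ∈ Finset.range P.N, ∑ k ∈ Finset.Ico (κ i) (κ (i + 1)),
          (θg * (Mt k).toReal + G * (ρ + θx) * (Dt k).toReal) := by
        refine (Finset.abs_sum_le_sum_abs _ _).trans (Finset.sum_le_sum fun i hi => ?_)
        exact (Finset.abs_sum_le_sum_abs _ _).trans
          (Finset.sum_le_sum fun k hk => key i hi k hk)
  _ = ∑ k ∈ Finset.range R.N, (θg * (Mt k).toReal + G * (ρ + θx) * (Dt k).toReal) := by
        rw [sum_Ico_kappa κ P.N href.2.2.1, href.1, href.2.1, ← Finset.range_eq_Ico]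
  _ = θg * (∑ k ∈ Finset.range R.N, (Mt k).toReal) +
        G * (ρ + θx) * ∑ k ∈ Finset.range R.N, (Dt k).toReal := by
        rw [Finset.sum_add_distrib, Finset.mul_sum, Finset.mul_sum]
  _ ≤ θg * C1.toReal + G * (ρ + θx) * C2.toReal := by
        have h1 : (∑ k ∈ Finset.range R.N, (Mt k).toReal) ≤ C1.toReal := by
          rw [← ENNReal.toReal_sum (fun k hk => hMtne k (Finset.mem_range.mp hk))]
          exact ENNReal.toReal_mono hC1 (hMtsum ▸ hfSum1)
        have h2 : (∑ k ∈ Finset.range R.N, (Dt k).toReal) ≤ C2.toReal := by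
          rw [← ENNReal.toReal_sum (fun k hk => hDtne k (Finset.mem_range.mp hk))]
          exact ENNReal.toReal_mono hC2 (hDtsum ▸ hfSum2)
        exact add_le_add (mul_le_mul_of_nonneg_left h1 hθg)
          (mul_le_mul_of_nonneg_left h2 (by positivity))

end S13
namespace S13

open Set Metric Filter MeasureTheory Pointwise Finset
open scoped ENNReal Topology RealInnerProductSpace

variable {E α : Type*} [NormedAddCommGroup E] [PseudoEMetricSpace α]
variable {m : ℝ → E → α} {xbar : ℝ → E} {S T : ℝ}

lemma fEtaEps_mono_delta {δ δ' ε : ℝ} (hδ : δ ≤ δ') :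
    fEtaEps m xbar δ ε S T ≤ fEtaEps m xbar δ' ε S T :=
  iSup₂_le fun P hP => (fSum_mono_delta hδ P).trans (fSum_le_fEtaEps hP)

/-- combined choice of finite bounds for `m` and its `x`-derivative. -/
lemma exists_finite_pair {n r : ℕ} {m : ℝ → En n → En r} {xbar : ℝ → En n}
    (hBV2 : HypBV2 m xbar S T) :
    ∃ δ0 > 0, ∃ ε0 > 0, fEtaEps m xbar δ0 ε0 S T ≠ ⊤ ∧
      fEtaEps (fun t x => fderiv ℝ (m t) x) xbar δ0 ε0 S T ≠ ⊤ := by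
  obtain ⟨δ1, hδ1, ε1, hε1, h1⟩ := exists_finite_fEtaEps hBV2.1
  obtain ⟨δ2, hδ2, ε2, hε2, h2⟩ := exists_finite_fEtaEps hBV2.2
  refine ⟨min δ1 δ2, lt_min hδ1 hδ2, min ε1 ε2, lt_min hε1 hε2, ?_, ?_⟩
  · exact ne_top_of_le_ne_top h1.ne
      ((fEtaEps_mono_delta (min_le_left _ _)).trans (fEtaEps_mono_eps (min_le_left _ _)))
  · exact ne_top_of_le_ne_top h2.ne
      ((fEtaEps_mono_delta (min_le_right _ _)).trans (fEtaEps_mono_eps (min_le_right _ _)))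

end S13

/-- Under (BV1) and (BV2), the weak* limit of the discrete measures
`μʲ = Σᵢ [m(tʲᵢ₊₁,ξʲᵢ) − m(tʲᵢ,ξʲᵢ)] δ_{tʲᵢ}` does not depend on the admissible choice
of partitions (diameters tending to `0`), of `ρʲ ↓ 0`, or of the vectors `ξʲᵢ`: for
every continuous `g`, the limits of the pairings along any two admissible choices
coincide. -/
theorem statement13 {n r : ℕ} (m : ℝ → En n → En r) (xbar : ℝ → En n)
    (S T : ℝ) (hST : S < T) (δ' : ℝ)
    (hBV1 : HypBV1 m xbar S T δ') (hBV2 : HypBV2 m xbar S T)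
    (P P' : ℕ → IntervalPartition S T)
    (hdiam : ∀ ε : ℝ, 0 < ε → ∃ J : ℕ, ∀ j ≥ J, (P j).diamLE ε)
    (hdiam' : ∀ ε : ℝ, 0 < ε → ∃ J : ℕ, ∀ j ≥ J, (P' j).diamLE ε)
    (ρ ρ' : ℕ → ℝ) (hρpos : ∀ j, 0 < ρ j) (hρ'pos : ∀ j, 0 < ρ' j)
    (hρanti : Antitone ρ) (hρ'anti : Antitone ρ')
    (hρ : Tendsto ρ atTop (𝓝 0)) (hρ' : Tendsto ρ' atTop (𝓝 0))
    (ξ ξ' : ℕ → ℕ → En n)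
    (hξ : ∀ j i, i < (P j).N →
      ∃ t ∈ Set.Icc ((P j).pts i) ((P j).pts (i + 1)),
        ξ j i ∈ Metric.closedBall (xbar t) (ρ j))
    (hξ' : ∀ j i, i < (P' j).N →
      ∃ t ∈ Set.Icc ((P' j).pts i) ((P' j).pts (i + 1)),
        ξ' j i ∈ Metric.closedBall (xbar t) (ρ' j)) :
    ∀ g : ℝ → En r, Continuous g →
      ∀ L L' : ℝ,
        Tendsto (fun j => discretePairing m (P j) (ξ j) g) atTop (𝓝 L) →
        Tendsto (fun j => discretePairing m (P' j) (ξ' j) g) atTop (𝓝 L') →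
        L = L' := by
  intro g hg L L' hL hL'
  have hδ'pos : 0 < δ' := hBV1.2.1
  obtain ⟨δ0, hδ0, ε0, hε0, hC1ne, hC2ne⟩ := S13.exists_finite_pair hBV2
  set C1 := fEtaEps m xbar δ0 ε0 S T with hC1def
  set C2 := fEtaEps (fun t x => fderiv ℝ (m t) x) xbar δ0 ε0 S T with hC2def
  obtain ⟨G0, hG0⟩ := isCompact_Icc.exists_bound_of_continuousOn
    (hg.continuousOn : ContinuousOn g (Set.Icc S T))
  set G := max G0 0 with hGdef
  have hG : ∀ t ∈ Set.Icc S T, ‖g t‖ ≤ G := fun t ht => (hG0 t ht).trans (le_max_left _ _)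
  have hGnn : (0 : ℝ) ≤ G := le_max_right _ _
  have hgu : UniformContinuousOn g (Set.Icc S T) :=
    isCompact_Icc.uniformContinuousOn_of_continuous hg.continuousOn
  have hxu : UniformContinuousOn xbar (Set.Icc S T) :=
    isCompact_Icc.uniformContinuousOn_of_continuous hBV1.1
  suffices h : ∀ θ : ℝ, 0 < θ → |L - L'| ≤ θ by
    by_contra hne
    have h1 : 0 < |L - L'| := abs_pos.mpr (sub_ne_zero.mpr hne)
    have := h (|L - L'| / 2) (by linarith)
    linarith
  intro θ hθ
  have hC1nn : (0:ℝ) ≤ C1.toReal := ENNReal.toReal_nonneg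
  have hC2nn : (0:ℝ) ≤ C2.toReal := ENNReal.toReal_nonneg
  set θg := θ / (4 * (C1.toReal + 1)) with hθgdef
  have hθgpos : 0 < θg := by positivity
  set c2 := θ / (16 * (G + 1) * (C2.toReal + 1)) with hc2def
  have hc2pos : 0 < c2 := by positivity
  set θx := min c2 (min (δ0 / 2) (δ' / 4)) with hθxdef
  have hθxpos : 0 < θx := lt_min hc2pos (lt_min (by positivity) (by positivity))
  obtain ⟨εg, hεg, hgmod0⟩ := Metric.uniformContinuousOn_iff_le.mp hgu θg hθgpos
  obtain ⟨εx, hεx, hxmod0⟩ := Metric.uniformContinuousOn_iff_le.mp hxu θx hθxpos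
  set ε := min εg (min εx ε0) with hεdef
  have hεpos : 0 < ε := lt_min hεg (lt_min hεx hε0)
  have hεε0 : ε ≤ ε0 := (min_le_right _ _).trans (min_le_right _ _)
  have hgmod : ∀ s t, s ∈ Set.Icc S T → t ∈ Set.Icc S T → |s - t| ≤ ε →
      ‖g s - g t‖ ≤ θg := by
    intro s t hs ht hd
    rw [← dist_eq_norm]
    exact hgmod0 s hs t ht
      (by rw [Real.dist_eq]; exact hd.trans ((min_le_left _ _)))
  have hxmod : ∀ s t, s ∈ Set.Icc S T → t ∈ Set.Icc S T → |s - t| ≤ ε →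
      ‖xbar s - xbar t‖ ≤ θx := by
    intro s t hs ht hd
    rw [← dist_eq_norm]
    exact hxmod0 s hs t ht
      (by rw [Real.dist_eq]
          exact hd.trans ((min_le_right _ _).trans (min_le_left _ _)))
  have hsize1 : θx + θx ≤ δ0 := by
    have h : θx ≤ δ0 / 2 := (min_le_right c2 _).trans (min_le_left (δ0/2) (δ'/4))
    linarith
  have hsize2 : θx + 2 * θx < δ' := by
    have h : θx ≤ δ' / 4 := (min_le_right c2 _).trans (min_le_right (δ0/2) (δ'/4))
    linarith
  -- the eventual bound on the difference of the two pairings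
  have hev : ∀ᶠ j in atTop,
      |discretePairing m (P j) (ξ j) g - discretePairing m (P' j) (ξ' j) g| ≤ θ := by
    obtain ⟨J1, hJ1⟩ := hdiam ε hεpos
    obtain ⟨J2, hJ2⟩ := hdiam' ε hεpos
    have h3 : ∀ᶠ j in atTop, ρ j < θx := hρ.eventually_lt_const hθxpos
    have h4 : ∀ᶠ j in atTop, ρ' j < θx := hρ'.eventually_lt_const hθxpos
    filter_upwards [eventually_ge_atTop J1, eventually_ge_atTop J2, h3, h4]
      with j hj1 hj2 hj3 hj4
    obtain ⟨R, κ, κ', hκ, hκ'⟩ := S13.exists_common_refinement (P j) (P' j) hST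
    have hkey1 := S13.key_estimate m xbar hBV1 hδ0 hε0 hC1ne hC2ne le_rfl le_rfl g hG hGnn
      hθgpos.le hθxpos hθxpos.le hεpos hεε0 hgmod hxmod hsize1 hsize2 hκ (hJ1 j hj1)
      (ξ j) (fun i hi => by
        obtain ⟨t, ht, hb⟩ := hξ j i hi
        exact ⟨t, ht, Metric.closedBall_subset_closedBall hj3.le hb⟩)
    have hkey2 := S13.key_estimate m xbar hBV1 hδ0 hε0 hC1ne hC2ne le_rfl le_rfl g hG hGnn
      hθgpos.le hθxpos hθxpos.le hεpos hεε0 hgmod hxmod hsize1 hsize2 hκ' (hJ2 j hj2)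
      (ξ' j) (fun i hi => by
        obtain ⟨t, ht, hb⟩ := hξ' j i hi
        exact ⟨t, ht, Metric.closedBall_subset_closedBall hj4.le hb⟩)
    have hE : θg * C1.toReal + G * (θx + θx) * C2.toReal ≤ θ / 2 := by
      have h1 : θg * C1.toReal ≤ θ / 4 := by
        have heq : θg * (C1.toReal + 1) = θ / 4 := by
          rw [hθgdef]; field_simp
        nlinarith
      have hθxc2 : θx ≤ c2 := min_le_left _ _
      have h2 : G * (θx + θx) * C2.toReal ≤ θ / 4 := by
        have heq : (G + 1) * (2 * c2) * (C2.toReal + 1) = θ / 8 := by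
          rw [hc2def]; field_simp; ring
        have e1 : G * (θx + θx) ≤ (G + 1) * (2 * c2) := by nlinarith
        have m1 : G * (θx + θx) * C2.toReal ≤ (G + 1) * (2 * c2) * (C2.toReal + 1) :=
          mul_le_mul e1 (by linarith) hC2nn (by positivity)
        linarith
      linarith
    calc |discretePairing m (P j) (ξ j) g - discretePairing m (P' j) (ξ' j) g|
        ≤ |discretePairing m (P j) (ξ j) g
            - discretePairing m R (fun k => xbar (R.pts k)) g| +
          |discretePairing m R (fun k => xbar (R.pts k)) g
            - discretePairing m (P' j) (ξ' j) g| := abs_sub_le _ _ _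
    _ ≤ (θg * C1.toReal + G * (θx + θx) * C2.toReal) +
          (θg * C1.toReal + G * (θx + θx) * C2.toReal) := by
        refine add_le_add hkey1 ?_
        rw [abs_sub_comm]
        exact hkey2
    _ ≤ θ := by linarith
  have htend : Tendsto (fun j =>
      |discretePairing m (P j) (ξ j) g - discretePairing m (P' j) (ξ' j) g|)
      atTop (𝓝 |L - L'|) := (hL.sub hL').abs
  exact le_of_tendsto htend hev

end
end

section
/- Let m : [S,T] × ℝⁿ → ℝ^r and x̄ : [S,T] → ℝⁿ satisfy hypotheses (BV1) and (BV2). Take any sequence of partitions {t^j_i}_{i=0}^{N_j} of [S,T] with diam({t^j_i}) → 0, any sequence ρ^j ↓ 0, and collections {ξ^j_i} with ξ^j_i ∈ x̄(t) + ρ^j 𝔹 for some t ∈ [t^j_i, t^j_{i+1}], and define μ^j := Σ_{i=0}^{N_j−1} [m(t^j_{i+1}, ξ^j_i) − m(t^j_i, ξ^j_i)] δ_{t^j_i}. Then for every continuous function g : [S,T] → ℝ^r, the sequence of real numbers ⟨μ^j, g⟩ := ∫_{[S,T]} g(t)·dμ^j(t) is a Cauchy sequence; in particular lim_{j→∞}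 sup_{j'≥j} |⟨μ^j − μ^{j'}, g⟩| = 0. -/
open Set Metric Filter MeasureTheory Pointwise
open scoped ENNReal Topology InnerProductSpace

noncomputable section

-- ===== auxiliary lemmas =====

lemma IntervalPartition.pts_mono {S T : ℝ} (P : IntervalPartition S T) {a b : ℕ} (hab : a ≤ b)
    (hbN : b ≤ P.N) : P.pts a ≤ P.pts b := by
  induction b with
  | zero => obtain rfl : a = 0 := Nat.le_zero.mp hab; exact le_rfl
  | succ k ih =>
    rcases Nat.lt_or_ge a (k + 1) with h | h
    · exact le_trans (ih (Nat.lt_succ_iff.mp h) (by omega))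
        (le_of_lt (P.mono k (by omega)))
    · obtain rfl : a = k + 1 := by omega
      exact le_rfl

lemma IntervalPartition.pts_strict {S T : ℝ} (P : IntervalPartition S T) {a b : ℕ} (hab : a < b)
    (hbN : b ≤ P.N) : P.pts a < P.pts b :=
  lt_of_lt_of_le (P.mono a (by omega)) (P.pts_mono hab hbN)

lemma IntervalPartition.pts_mem {S T : ℝ} (P : IntervalPartition S T) {i : ℕ} (h : i ≤ P.N) :
    P.pts i ∈ Set.Icc S T := by
  constructor
  · have h2 := P.pts_mono (Nat.zero_le i) h
    rwa [P.first] at h2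
  · have h2 := P.pts_mono h le_rfl
    rwa [P.last] at h2

/-- `e` realises `P` as a sub-partition of the refinement `Q`. -/
def Ref {S T : ℝ} (P Q : IntervalPartition S T) (e : ℕ → ℕ) : Prop :=
  e 0 = 0 ∧ e P.N = Q.N ∧ (∀ i < P.N, e i < e (i + 1)) ∧ ∀ i ≤ P.N, Q.pts (e i) = P.pts i

lemma step_mono {e : ℕ → ℕ} {M : ℕ} (h : ∀ i < M, e i < e (i + 1)) {a b : ℕ}
    (hab : a ≤ b) (hbM : b ≤ M) : e a ≤ e b := by
  induction b with
  | zero => obtain rfl : a = 0 := Nat.le_zero.mp hab; exact le_rfl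
  | succ k ih =>
    rcases Nat.lt_or_ge a (k + 1) with hlt | hge
    · exact le_trans (ih (Nat.lt_succ_iff.mp hlt) (by omega)) (le_of_lt (h k (by omega)))
    · obtain rfl : a = k + 1 := by omega
      exact le_rfl

lemma telescope_Ico (f : ℕ → ℝ) {a b : ℕ} (hab : a ≤ b) :
    ∑ k ∈ Finset.Ico a b, (f (k + 1) - f k) = f b - f a := by
  rw [Finset.sum_Ico_eq_sum_range]
  have h := Finset.sum_range_sub (fun j => f (a + j)) (b - a)
  calc ∑ j ∈ Finset.range (b - a), (f (a + j + 1) - f (a + j))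
      = ∑ j ∈ Finset.range (b - a), ((fun j => f (a + j)) (j + 1) - (fun j => f (a + j)) j) := by
        apply Finset.sum_congr rfl; intro j _; simp [Nat.add_assoc]
    _ = f (a + (b - a)) - f (a + 0) := by rw [h]
    _ = f b - f a := by rw [Nat.add_sub_cancel' hab, Nat.add_zero]

/-- Existence of a common refinement of two partitions. -/
lemma exists_refinement {S T : ℝ} (hST : S < T) (P1 P2 : IntervalPartition S T) :
    ∃ Q : IntervalPartition S T, ∃ e1 e2 : ℕ → ℕ, Ref P1 Q e1 ∧ Ref P2 Q e2 := by
  classical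
  set A : Finset ℝ :=
    (Finset.range (P1.N + 1)).image P1.pts ∪ (Finset.range (P2.N + 1)).image P2.pts with hA
  set L : List ℝ := A.sort (· ≤ ·) with hL
  have hmemA : ∀ x ∈ A, x ∈ Set.Icc S T := by
    intro x hx
    rw [hA, Finset.mem_union] at hx
    rcases hx with hx | hx <;>
    · rw [Finset.mem_image] at hx
      obtain ⟨i, hi, rfl⟩ := hx
      rw [Finset.mem_range] at hi
      first
        | exact P1.pts_mem (by omega)
        | exact P2.pts_mem (by omega)
  have hSA : S ∈ A := by
    rw [hA, Finset.mem_union, Finset.mem_image]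
    exact Or.inl ⟨0, by simp [P1.first]⟩
  have hTA : T ∈ A := by
    rw [hA, Finset.mem_union, Finset.mem_image]
    exact Or.inl ⟨P1.N, by simp [P1.last]⟩
  have hmemL : ∀ x, x ∈ L ↔ x ∈ A := fun x => Finset.mem_sort _
  have hsorted : L.SortedLT := Finset.sortedLT_sort A
  have hsm : StrictMono L.get := hsorted.strictMono_get
  have hlen : 2 ≤ L.length := by
    have hcard : L.length = A.card := Finset.length_sort _
    rw [hcard]
    exact Finset.one_lt_card.mpr ⟨S, hSA, T, hTA, ne_of_lt hST⟩
  -- every element of the list is in `[S,T]`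
  have hIccL : ∀ (i : ℕ) (h : i < L.length), L.get ⟨i, h⟩ ∈ Set.Icc S T := by
    intro i h
    exact hmemA _ ((hmemL _).mp (L.get_mem ⟨i, h⟩))
  -- index of an element
  have hidx : ∀ x ∈ A, L.idxOf x < L.length := by
    intro x hx
    exact List.idxOf_lt_length_iff.mpr ((hmemL x).mpr hx)
  have hidxget : ∀ x (hx : x ∈ A), L.get ⟨L.idxOf x, hidx x hx⟩ = x := by
    intro x hx
    exact List.getElem_idxOf (hidx x hx)
  -- head and last
  have hhead : ∀ (h0 : 0 < L.length), L.get ⟨0, h0⟩ = S := by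
    intro h0
    have hSL : L.idxOf S < L.length := hidx S hSA
    rcases Nat.eq_zero_or_pos (L.idxOf S) with hz | hp
    · have := hidxget S hSA
      simpa [hz] using this
    · exfalso
      have h1 : L.get ⟨0, h0⟩ < L.get ⟨L.idxOf S, hSL⟩ := hsm (by simpa using hp)
      rw [hidxget S hSA] at h1
      exact absurd (hIccL 0 h0).1 (not_le.mpr h1)
  have hlast : ∀ (h0 : L.length - 1 < L.length), L.get ⟨L.length - 1, h0⟩ = T := by
    intro h0
    have hTL : L.idxOf T < L.length := hidx T hTA
    rcases Nat.lt_or_ge (L.idxOf T) (L.length - 1) with hp | hge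
    · exfalso
      have h1 : L.get ⟨L.idxOf T, hTL⟩ < L.get ⟨L.length - 1, h0⟩ := hsm (by simpa using hp)
      rw [hidxget T hTA] at h1
      exact absurd (hIccL _ h0).2 (not_le.mpr h1)
    · have heq : (⟨L.length - 1, h0⟩ : Fin L.length) = ⟨L.idxOf T, hTL⟩ := by
        apply Fin.ext; simp; omega
      rw [heq]
      exact hidxget T hTA
  -- head/last done; now a generic construction
  have hget_mem : ∀ (i : ℕ) (h : i < L.length), L.get ⟨i, h⟩ ∈ L := fun i h => L.get_mem ⟨i, h⟩
  have key : ∀ Q : IntervalPartition S T, Q.N = L.length - 1 →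
      (∀ (i : ℕ) (h : i < L.length), Q.pts i = L.get ⟨i, h⟩) →
      ∀ P' : IntervalPartition S T, (∀ i, i ≤ P'.N → P'.pts i ∈ A) →
        Ref P' Q (fun i => L.idxOf (P'.pts i)) := by
    intro Q hQN hQpts P' hPA
    have hlt : ∀ i, i ≤ P'.N → L.idxOf (P'.pts i) < L.length := fun i hi => hidx _ (hPA i hi)
    have hget : ∀ i (hi : i ≤ P'.N),
        L.get ⟨L.idxOf (P'.pts i), hlt i hi⟩ = P'.pts i := fun i hi => hidxget _ (hPA i hi)
    refine ⟨?_, ?_, ?_, ?_⟩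
    · -- e 0 = 0
      have h0 : L.idxOf (P'.pts 0) < L.length := hlt 0 (Nat.zero_le _)
      by_contra hne
      have hp : 0 < L.idxOf (P'.pts 0) := Nat.pos_of_ne_zero hne
      have h1 : L.get ⟨0, by omega⟩ < L.get ⟨L.idxOf (P'.pts 0), h0⟩ := hsm (by simpa using hp)
      rw [hget 0 (Nat.zero_le _), P'.first, hhead] at h1
      exact lt_irrefl S h1
    · -- e P'.N = Q.N
      have hN : L.idxOf (P'.pts P'.N) < L.length := hlt P'.N le_rfl
      show L.idxOf (P'.pts P'.N) = Q.N
      rw [hQN]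
      rcases Nat.lt_or_ge (L.idxOf (P'.pts P'.N)) (L.length - 1) with hp | hge2
      · exfalso
        have h1 : L.get ⟨L.idxOf (P'.pts P'.N), hN⟩ < L.get ⟨L.length - 1, by omega⟩ :=
          hsm (by simpa using hp)
        rw [hget P'.N le_rfl, P'.last, hlast] at h1
        exact lt_irrefl T h1
      · omega
    · -- strictly increasing
      intro i hi
      have h1 : P'.pts i < P'.pts (i + 1) := P'.mono i hi
      by_contra hc
      push_neg at hc
      have h2 : L.get ⟨L.idxOf (P'.pts (i+1)), hlt (i+1) (by omega)⟩ ≤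
          L.get ⟨L.idxOf (P'.pts i), hlt i (by omega)⟩ := by
        rcases Nat.lt_or_ge (L.idxOf (P'.pts (i+1))) (L.idxOf (P'.pts i)) with h | h
        · exact le_of_lt (hsm (by simpa using h))
        · have he : L.idxOf (P'.pts (i+1)) = L.idxOf (P'.pts i) := by omega
          exact le_of_eq (congrArg L.get (Fin.ext he))
      rw [hget i (by omega), hget (i+1) (by omega)] at h2
      exact absurd h1 (not_lt.mpr h2)
    · -- points agree
      intro i hi
      rw [hQpts _ (hlt i hi)]
      exact hget i hi
  -- construct Q
  have hfirst : (fun i => if h : i < L.length then L.get ⟨i, h⟩ else T) 0 = S := by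
    simp only [dif_pos (show 0 < L.length by omega)]
    exact hhead _
  have hlast' : (fun i => if h : i < L.length then L.get ⟨i, h⟩ else T) (L.length - 1) = T := by
    simp only [dif_pos (show L.length - 1 < L.length by omega)]
    exact hlast _
  have hmono' : ∀ i, i < L.length - 1 →
      (fun i => if h : i < L.length then L.get ⟨i, h⟩ else T) i <
      (fun i => if h : i < L.length then L.get ⟨i, h⟩ else T) (i + 1) := by
    intro i hi
    simp only [dif_pos (show i < L.length by omega), dif_pos (show i + 1 < L.length by omega)]
    exact hsm (by simp)
  set Q : IntervalPartition S T :=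
    ⟨L.length - 1, fun i => if h : i < L.length then L.get ⟨i, h⟩ else T, by omega,
      hfirst, hlast', hmono'⟩ with hQ
  have hQN : Q.N = L.length - 1 := rfl
  have hQpts : ∀ (i : ℕ) (h : i < L.length), Q.pts i = L.get ⟨i, h⟩ := by
    intro i h
    show (if h' : i < L.length then L.get ⟨i, h'⟩ else T) = _
    rw [dif_pos h]
  have hP1A : ∀ i, i ≤ P1.N → P1.pts i ∈ A := by
    intro i hi
    rw [hA, Finset.mem_union, Finset.mem_image]
    exact Or.inl ⟨i, Finset.mem_range.mpr (by omega), rfl⟩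
  have hP2A : ∀ i, i ≤ P2.N → P2.pts i ∈ A := by
    intro i hi
    rw [hA, Finset.mem_union, Finset.mem_image]
    exact Or.inr (Finset.mem_image.mpr ⟨i, Finset.mem_range.mpr (by omega), rfl⟩)
  exact ⟨Q, _, _, key Q hQN hQpts P1 hP1A, key Q hQN hQpts P2 hP2A⟩

lemma sum_blocks (e : ℕ → ℕ) (G : ℕ → ℝ) (M : ℕ) (hmono : ∀ i < M, e i < e (i + 1)) :
    ∑ i ∈ Finset.range M, ∑ k ∈ Finset.Ico (e i) (e (i + 1)), G k
      = ∑ k ∈ Finset.Ico (e 0) (e M), G k := by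
  induction M with
  | zero => simp
  | succ M ih =>
    rw [Finset.sum_range_succ, ih (fun i hi => hmono i (by omega)),
      Finset.sum_Ico_consecutive _ (step_mono hmono (Nat.zero_le M) (Nat.le_succ M))
        (le_of_lt (hmono M (Nat.lt_succ_self M)))]

lemma regroup {n r : ℕ} (m : ℝ → En n → En r) {S T : ℝ}
    {P Q : IntervalPartition S T} {e : ℕ → ℕ} (h : Ref P Q e)
    (ξ : ℕ → En n) (g : ℝ → En r) :
    ∃ c : ℕ → ℕ,
      (∀ k, k < Q.N → c k < P.N ∧ e (c k) ≤ k ∧ k < e (c k + 1)) ∧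
      discretePairing m P ξ g =
        ∑ k ∈ Finset.range Q.N, ∑ l : Fin r,
          g (P.pts (c k)) l *
            (m (Q.pts (k + 1)) (ξ (c k)) l - m (Q.pts k) (ξ (c k)) l) := by
  classical
  obtain ⟨he0, heN, hstep, hpts⟩ := h
  set c : ℕ → ℕ := fun k => Nat.findGreatest (fun i => e i ≤ k) P.N with hc
  have hspec : ∀ k, e (c k) ≤ k := by
    intro k
    have hm : (fun i => e i ≤ k) 0 := by
      show e 0 ≤ k
      rw [he0]
      exact Nat.zero_le k
    exact Nat.findGreatest_spec (P := fun i => e i ≤ k) (Nat.zero_le P.N) hm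
  have hcle : ∀ k, c k ≤ P.N := fun k => Nat.findGreatest_le _
  have hcN : ∀ k, k < Q.N → c k < P.N := by
    intro k hk
    rcases Nat.lt_or_ge (c k) P.N with h | h
    · exact h
    · exfalso
      have hEq : c k = P.N := le_antisymm (hcle k) h
      have h2 := hspec k
      rw [hEq, heN] at h2
      omega
  have hcup : ∀ k, k < Q.N → k < e (c k + 1) := by
    intro k hk
    by_contra hcon
    push_neg at hcon
    have h5 : c k + 1 ≤ Nat.findGreatest (fun i => e i ≤ k) P.N :=
      Nat.le_findGreatest (hcN k hk) hcon
    have h6 : Nat.findGreatest (fun i => e i ≤ k) P.N = c k := rfl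
    omega
  have hcuniq : ∀ i k, i < P.N → e i ≤ k → k < e (i + 1) → c k = i := by
    intro i k hi hle hlt
    have h6 : Nat.findGreatest (fun i => e i ≤ k) P.N = c k := rfl
    have h1 : i ≤ c k := h6 ▸ Nat.le_findGreatest (by omega) hle
    have h2 : c k ≤ i := by
      by_contra hcon
      push_neg at hcon
      have h3 : e (i + 1) ≤ e (c k) := step_mono hstep (by omega) (hcle k)
      have h4 := hspec k
      omega
    omega
  refine ⟨c, fun k hk => ⟨hcN k hk, hspec k, hcup k hk⟩, ?_⟩
  set F : ℕ → ℕ → ℝ := fun i k => ∑ l : Fin r, g (P.pts i) l * m (Q.pts k) (ξ i) l with hF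
  have step1 : discretePairing m P ξ g
      = ∑ i ∈ Finset.range P.N, (F i (e (i + 1)) - F i (e i)) := by
    unfold discretePairing
    apply Finset.sum_congr rfl
    intro i hi
    rw [Finset.mem_range] at hi
    rw [hF]
    simp only []
    rw [← Finset.sum_sub_distrib]
    apply Finset.sum_congr rfl
    intro l _
    rw [hpts i (by omega), hpts (i + 1) (by omega), mul_sub]
  rw [step1]
  have step2 : ∀ i ∈ Finset.range P.N, F i (e (i + 1)) - F i (e i)
      = ∑ k ∈ Finset.Ico (e i) (e (i + 1)), (F (c k) (k + 1) - F (c k) k) := by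
    intro i hi
    rw [Finset.mem_range] at hi
    rw [← telescope_Ico (fun k => F i k) (le_of_lt (hstep i hi))]
    apply Finset.sum_congr rfl
    intro k hk
    rw [Finset.mem_Ico] at hk
    rw [hcuniq i k hi hk.1 hk.2]
  rw [Finset.sum_congr rfl step2,
    sum_blocks e (fun k => F (c k) (k + 1) - F (c k) k) P.N hstep, he0, heN,
    ← Finset.range_eq_Ico]
  apply Finset.sum_congr rfl
  intro k _
  rw [hF]
  simp only []
  rw [← Finset.sum_sub_distrib]
  apply Finset.sum_congr rfl
  intro l _
  rw [mul_sub]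


lemma exists_finite_bound {E α : Type*} [NormedAddCommGroup E] [PseudoEMetricSpace α]
    {m : ℝ → E → α} {xbar : ℝ → E} {S T : ℝ} (h : FunHasBVAlong m xbar S T) :
    ∃ δ > 0, ∃ ε > 0, fEtaEps m xbar δ ε S T ≠ ⊤ := by
  by_contra hc
  push_neg at hc
  have htop : fEta m xbar S T = ⊤ := by
    rw [fEta, iInf_eq_top]
    intro δ
    rw [iInf_eq_top]
    intro hδ
    rw [fEtaDelta, iInf_eq_top]
    intro ε
    rw [iInf_eq_top]
    intro hε
    exact hc δ hδ ε hε
  rw [FunHasBVAlong, htop] at h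
  exact lt_irrefl ⊤ h

lemma fSum_mono_delta {E α : Type*} [NormedAddCommGroup E] [PseudoEMetricSpace α]
    (m : ℝ → E → α) (xbar : ℝ → E) {δ δ₂ : ℝ} (hδ : δ ≤ δ₂) {S T : ℝ} (Q : IntervalPartition S T) :
    fSum m xbar δ Q ≤ fSum m xbar δ₂ Q := by
  apply Finset.sum_le_sum
  intro i _
  apply biSup_mono
  intro x hx
  exact Set.add_subset_add_left (Metric.closedBall_subset_closedBall hδ) hx

lemma fSum_le_fEtaEps {E α : Type*} [NormedAddCommGroup E] [PseudoEMetricSpace α]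
    (m : ℝ → E → α) (xbar : ℝ → E) (δ : ℝ) {ε S T : ℝ} {Q : IntervalPartition S T}
    (hd : Q.diamLE ε) : fSum m xbar δ Q ≤ fEtaEps m xbar δ ε S T :=
  le_iSup₂ (f := fun (P : IntervalPartition S T) (_ : P.diamLE ε) => fSum m xbar δ P) Q hd

lemma sum_coord_eq_inner {r : ℕ} (a b c : En r) :
    ∑ l : Fin r, a l * (b l - c l) = ⟪a, b - c⟫_ℝ := by
  rw [PiLp.inner_apply]
  apply Finset.sum_congr rfl
  intro l _
  simp [RCLike.inner_apply, PiLp.sub_apply]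
  ring


set_option maxHeartbeats 1000000 in
/-- Under (BV1) and (BV2), for any admissible sequence of partitions
of `[S,T]` (diameters tending to `0`), `ρʲ ↓ 0` and vectors `ξʲᵢ ∈ x̄(t) + ρʲ𝔹`,
`t ∈ [tʲᵢ,tʲᵢ₊₁]`, and for every continuous `g : [S,T] → ℝʳ`, the sequence of
pairings `⟨μʲ, g⟩` is a Cauchy sequence of real numbers. -/
theorem statement14 {n r : ℕ} (m : ℝ → En n → En r) (xbar : ℝ → En n)
    (S T : ℝ) (hST : S < T) (δ' : ℝ)
    (hBV1 : HypBV1 m xbar S T δ') (hBV2 : HypBV2 m xbar S T)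
    (P : ℕ → IntervalPartition S T)
    (hdiam : ∀ ε : ℝ, 0 < ε → ∃ J : ℕ, ∀ j ≥ J, (P j).diamLE ε)
    (ρ : ℕ → ℝ) (hρpos : ∀ j, 0 < ρ j) (hρanti : Antitone ρ)
    (hρ : Tendsto ρ atTop (𝓝 0))
    (ξ : ℕ → ℕ → En n)
    (hξ : ∀ j i, i < (P j).N →
      ∃ t ∈ Set.Icc ((P j).pts i) ((P j).pts (i + 1)),
        ξ j i ∈ Metric.closedBall (xbar t) (ρ j)) :
    ∀ g : ℝ → En r, Continuous g →
      CauchySeq fun j => discretePairing m (P j) (ξ j) g := by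
  intro g hg
  classical
  obtain ⟨hxc, hδ'pos, hdiff⟩ := hBV1
  obtain ⟨hbv1, hbv2⟩ := hBV2
  obtain ⟨δ₁, hδ₁, ε₁, hε₁, hB1top⟩ := exists_finite_bound hbv1
  obtain ⟨δ₂, hδ₂, ε₂, hε₂, hB2top⟩ := exists_finite_bound hbv2
  set B1 := fEtaEps m xbar δ₁ ε₁ S T with hB1d
  set B2 := fEtaEps (fun t x => fderiv ℝ (m t) x) xbar δ₂ ε₂ S T with hB2d
  set C1 : ℝ := B1.toReal with hC1d
  set C2 : ℝ := B2.toReal with hC2d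
  have hC1 : 0 ≤ C1 := ENNReal.toReal_nonneg
  have hC2 : 0 ≤ C2 := ENNReal.toReal_nonneg
  set δm : ℝ := min δ₁ (min δ₂ δ') with hδmd
  have hδmpos : 0 < δm := lt_min hδ₁ (lt_min hδ₂ hδ'pos)
  have hδm1 : δm ≤ δ₁ := min_le_left _ _
  have hδm2 : δm ≤ δ₂ := le_trans (min_le_right _ _) (min_le_left _ _)
  have hδm' : δm ≤ δ' := le_trans (min_le_right _ _) (min_le_right _ _)
  obtain ⟨G, hG⟩ := isCompact_Icc.exists_bound_of_continuousOn
    (hg.continuousOn : ContinuousOn g (Set.Icc S T))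
  have hG0 : 0 ≤ G := le_trans (norm_nonneg _) (hG S ⟨le_refl S, le_of_lt hST⟩)
  have hxuc := isCompact_Icc.uniformContinuousOn_of_continuous hxc
  have hguc := isCompact_Icc.uniformContinuousOn_of_continuous
    (hg.continuousOn : ContinuousOn g (Set.Icc S T))
  rw [Metric.uniformContinuousOn_iff] at hxuc hguc
  rw [Metric.cauchySeq_iff]
  intro ε hε
  obtain ⟨κ₁, hκ₁pos, hκ₁C⟩ : ∃ κ₁ : ℝ, 0 < κ₁ ∧ κ₁ * (C1 + 1) ≤ ε / 4 :=
    ⟨ε / (4 * (C1 + 1)), by positivity, le_of_eq (by field_simp)⟩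
  obtain ⟨κ₃, hκ₃pos, hκ₃δ, hκ₃C⟩ :
      ∃ κ₃ : ℝ, 0 < κ₃ ∧ κ₃ ≤ δm / 8 ∧ 4 * κ₃ * ((G + 1) * (C2 + 1)) ≤ ε / 4 := by
    refine ⟨min (δm / 8) (ε / (16 * (G + 1) * (C2 + 1))), lt_min (by positivity) (by positivity),
      min_le_left _ _, ?_⟩
    have hk3 : min (δm / 8) (ε / (16 * (G + 1) * (C2 + 1))) ≤ ε / (16 * (G + 1) * (C2 + 1)) :=
      min_le_right _ _
    have s2 := mul_le_mul_of_nonneg_right hk3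
      (show (0:ℝ) ≤ 4 * ((G + 1) * (C2 + 1)) by positivity)
    have s3 : (ε / (16 * (G + 1) * (C2 + 1))) * (4 * ((G + 1) * (C2 + 1))) = ε / 4 := by
      field_simp
      ring
    nlinarith [s2, s3]
  obtain ⟨dg, hdgpos, hdg⟩ := hguc κ₁ hκ₁pos
  obtain ⟨dx, hdxpos, hdx⟩ := hxuc κ₃ hκ₃pos
  set εd : ℝ := min (min (dg / 4) (dx / 4)) (min ε₁ ε₂) with hεdd
  have hεdpos : 0 < εd := lt_min (lt_min (by positivity) (by positivity)) (lt_min hε₁ hε₂)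
  have hεdg : εd ≤ dg / 4 := le_trans (min_le_left _ _) (min_le_left _ _)
  have hεdx : εd ≤ dx / 4 := le_trans (min_le_left _ _) (min_le_right _ _)
  have hεd1 : εd ≤ ε₁ := le_trans (min_le_right _ _) (min_le_left _ _)
  have hεd2 : εd ≤ ε₂ := le_trans (min_le_right _ _) (min_le_right _ _)
  obtain ⟨J1, hJ1⟩ := hdiam εd hεdpos
  obtain ⟨J2, hJ2⟩ := eventually_atTop.mp (hρ.eventually (gt_mem_nhds hκ₃pos))
  refine ⟨max J1 J2, ?_⟩
  intro j hj j' hj'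
  obtain ⟨Q, e1, e2, hre1, hre2⟩ := exists_refinement hST (P j) (P j')
  obtain ⟨c1, hc1, hsum1⟩ := regroup m hre1 (ξ j) g
  obtain ⟨c2, hc2, hsum2⟩ := regroup m hre2 (ξ j') g
  -- interval containment
  have contain : ∀ (PP : IntervalPartition S T) (e c : ℕ → ℕ), Ref PP Q e →
      (∀ k, k < Q.N → c k < PP.N ∧ e (c k) ≤ k ∧ k < e (c k + 1)) →
      ∀ k, k < Q.N → PP.pts (c k) ≤ Q.pts k ∧ Q.pts (k + 1) ≤ PP.pts (c k + 1) := by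
    intro PP e c hre hc k hk
    obtain ⟨he0, heN, hestep, hepts⟩ := hre
    obtain ⟨hcN, hcle, hclt⟩ := hc k hk
    constructor
    · have h := Q.pts_mono hcle (le_of_lt hk)
      rwa [hepts (c k) (le_of_lt hcN)] at h
    · have heup : e (c k + 1) ≤ Q.N := by
        rw [← heN]
        exact step_mono hestep hcN le_rfl
      have h := Q.pts_mono hclt heup
      rwa [hepts (c k + 1) hcN] at h
  have hcont1 := contain (P j) e1 c1 hre1 hc1
  have hQd : Q.diamLE εd := by
    intro k hk
    obtain ⟨h1, h2⟩ := hcont1 k hk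
    have h3 := hJ1 j (le_trans (le_max_left _ _) hj) (c1 k) (hc1 k hk).1
    linarith
  -- per-side geometry
  have side : ∀ jj, jj ≥ max J1 J2 → ∀ (e c : ℕ → ℕ), Ref (P jj) Q e →
      (∀ k, k < Q.N → c k < (P jj).N ∧ e (c k) ≤ k ∧ k < e (c k + 1)) →
      ∀ k, k < Q.N →
        ((P jj).pts (c k) ∈ Set.Icc S T ∧ |(P jj).pts (c k) - Q.pts k| ≤ εd) ∧
        dist (ξ jj (c k)) (xbar (Q.pts k)) ≤ 2 * κ₃ := by
    intro jj hjj e c hre hc k hk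
    have hdjj : (P jj).diamLE εd := hJ1 jj (le_trans (le_max_left _ _) hjj)
    obtain ⟨hPa, hPb⟩ := contain (P jj) e c hre hc k hk
    have hcN := (hc k hk).1
    have hlen : (P jj).pts (c k + 1) - (P jj).pts (c k) ≤ εd := hdjj (c k) hcN
    have hQab : Q.pts k < Q.pts (k + 1) := Q.mono k hk
    have haI : Q.pts k ∈ Set.Icc S T := Q.pts_mem (le_of_lt hk)
    refine ⟨⟨(P jj).pts_mem (le_of_lt hcN), by rw [abs_le]; constructor <;> linarith⟩, ?_⟩
    obtain ⟨t, htmem, htball⟩ := hξ jj (c k) hcN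
    have hpl := ((P jj).pts_mem (le_of_lt hcN)).1
    have hpu := ((P jj).pts_mem (show c k + 1 ≤ (P jj).N from hcN)).2
    have htI : t ∈ Set.Icc S T := ⟨by linarith [htmem.1], by linarith [htmem.2]⟩
    have htd : dist t (Q.pts k) < dx := by
      rw [Real.dist_eq, abs_lt]
      constructor <;> linarith [htmem.1, htmem.2, hεdx, hdxpos]
    have h4 := hdx t htI (Q.pts k) haI htd
    have hb := Metric.mem_closedBall.mp htball
    have hrj : ρ jj < κ₃ := hJ2 jj (le_trans (le_max_right _ _) hjj)
    calc dist (ξ jj (c k)) (xbar (Q.pts k))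
        ≤ dist (ξ jj (c k)) (xbar t) + dist (xbar t) (xbar (Q.pts k)) := dist_triangle _ _ _
      _ ≤ 2 * κ₃ := by linarith
  have side1 := side j hj e1 c1 hre1 hc1
  have side2 := side j' hj' e2 c2 hre2 hc2
  -- variation bounds along Q
  set Mk : ℕ → ℝ≥0∞ := fun k =>
    ⨆ x ∈ xbar '' Set.Icc (Q.pts k) (Q.pts (k + 1)) + Metric.closedBall (0 : En n) δm,
      edist (fderiv ℝ (m (Q.pts (k + 1))) x) (fderiv ℝ (m (Q.pts k)) x) with hMkd
  have hMksum : ∑ k ∈ Finset.range Q.N, Mk k ≤ B2 := by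
    have h1 : ∑ k ∈ Finset.range Q.N, Mk k
        = fSum (fun t x => fderiv ℝ (m t) x) xbar δm Q := rfl
    rw [h1, hB2d]
    exact le_trans (fSum_mono_delta _ _ hδm2 Q)
      (fSum_le_fEtaEps _ _ _ (show Q.diamLE ε₂ from fun k hk => le_trans (hQd k hk) hεd2))
  have hMkne : ∀ k ∈ Finset.range Q.N, Mk k ≠ ⊤ := by
    intro k hk
    exact ne_top_of_le_ne_top hB2top
      (le_trans (Finset.single_le_sum (fun i _ => zero_le) hk) hMksum)
  have hMkR : ∑ k ∈ Finset.range Q.N, (Mk k).toReal ≤ C2 := by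
    rw [← ENNReal.toReal_sum hMkne]
    exact ENNReal.toReal_mono hB2top hMksum
  -- tube membership
  have tubemem : ∀ k, k < Q.N → ∀ x : En n, dist x (xbar (Q.pts k)) ≤ δm →
      x ∈ xbar '' Set.Icc (Q.pts k) (Q.pts (k + 1)) + Metric.closedBall (0 : En n) δm := by
    intro k hk x hx
    have hQab : Q.pts k ≤ Q.pts (k + 1) := le_of_lt (Q.mono k hk)
    have h1 : xbar (Q.pts k) ∈ xbar '' Set.Icc (Q.pts k) (Q.pts (k + 1)) :=
      Set.mem_image_of_mem _ (Set.left_mem_Icc.mpr hQab)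
    have h2 : x - xbar (Q.pts k) ∈ Metric.closedBall (0 : En n) δm :=
      mem_closedBall_zero_iff.mpr (by rw [← dist_eq_norm]; exact hx)
    have h3 := Set.add_mem_add h1 h2
    simpa using h3
  -- bound on the first variation sums
  have hDsum : ∑ k ∈ Finset.range Q.N,
      ‖m (Q.pts (k + 1)) (ξ j (c1 k)) - m (Q.pts k) (ξ j (c1 k))‖ ≤ C1 := by
    have hle : ∑ k ∈ Finset.range Q.N,
        edist (m (Q.pts (k + 1)) (ξ j (c1 k))) (m (Q.pts k) (ξ j (c1 k))) ≤ B1 := by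
      have h2 : fSum m xbar δm Q ≤ B1 := by
        rw [hB1d]
        exact le_trans (fSum_mono_delta _ _ hδm1 Q)
          (fSum_le_fEtaEps _ _ _ (show Q.diamLE ε₁ from fun k hk => le_trans (hQd k hk) hεd1))
      refine le_trans (Finset.sum_le_sum ?_) h2
      intro k hk
      rw [Finset.mem_range] at hk
      have hmem := tubemem k hk (ξ j (c1 k)) (by
        have h5 := (side1 k hk).2
        linarith [hκ₃δ, hδmpos])
      exact le_iSup₂
        (f := fun x (_ : x ∈ xbar '' Set.Icc (Q.pts k) (Q.pts (k + 1))
            + Metric.closedBall (0 : En n) δm) =>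
          edist (m (Q.pts (k + 1)) x) (m (Q.pts k) x)) _ hmem
    calc ∑ k ∈ Finset.range Q.N,
        ‖m (Q.pts (k + 1)) (ξ j (c1 k)) - m (Q.pts k) (ξ j (c1 k))‖
        = ∑ k ∈ Finset.range Q.N,
            (edist (m (Q.pts (k + 1)) (ξ j (c1 k))) (m (Q.pts k) (ξ j (c1 k)))).toReal := by
          apply Finset.sum_congr rfl
          intro k _
          rw [← dist_eq_norm, dist_edist]
      _ = (∑ k ∈ Finset.range Q.N,
            edist (m (Q.pts (k + 1)) (ξ j (c1 k))) (m (Q.pts k) (ξ j (c1 k)))).toReal :=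
          (ENNReal.toReal_sum (fun k _ => edist_ne_top _ _)).symm
      _ ≤ B1.toReal := ENNReal.toReal_mono hB1top hle
  -- the key pointwise estimate
  have key : ∀ k ∈ Finset.range Q.N,
      |(∑ l : Fin r, g ((P j).pts (c1 k)) l *
          (m (Q.pts (k + 1)) (ξ j (c1 k)) l - m (Q.pts k) (ξ j (c1 k)) l)) -
        ∑ l : Fin r, g ((P j').pts (c2 k)) l *
          (m (Q.pts (k + 1)) (ξ j' (c2 k)) l - m (Q.pts k) (ξ j' (c2 k)) l)|
      ≤ κ₁ * ‖m (Q.pts (k + 1)) (ξ j (c1 k)) - m (Q.pts k) (ξ j (c1 k))‖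
        + (G * (4 * κ₃)) * (Mk k).toReal := by
    intro k hkr
    rw [Finset.mem_range] at hkr
    obtain ⟨⟨hτ1I, hτ1d⟩, hζ1⟩ := side1 k hkr
    obtain ⟨⟨hτ2I, hτ2d⟩, hζ2⟩ := side2 k hkr
    rw [sum_coord_eq_inner, sum_coord_eq_inner]
    have hQab : Q.pts k < Q.pts (k + 1) := Q.mono k hkr
    have haI : Q.pts k ∈ Set.Icc S T := Q.pts_mem (le_of_lt hkr)
    have hbI : Q.pts (k + 1) ∈ Set.Icc S T := Q.pts_mem hkr
    have hgd : ‖g ((P j).pts (c1 k)) - g ((P j').pts (c2 k))‖ ≤ κ₁ := by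
      rw [abs_le] at hτ1d hτ2d
      have hd12 : dist ((P j).pts (c1 k)) ((P j').pts (c2 k)) < dg := by
        rw [Real.dist_eq, abs_lt]
        constructor <;> linarith [hεdg, hdgpos]
      rw [← dist_eq_norm]
      exact le_of_lt (hdg _ hτ1I _ hτ2I hd12)
    have hba : dist (xbar (Q.pts (k + 1))) (xbar (Q.pts k)) ≤ κ₃ := by
      have h5 : dist (Q.pts (k + 1)) (Q.pts k) < dx := by
        rw [Real.dist_eq, abs_lt]
        have h6 := hQd k hkr
        constructor <;> linarith [hεdx, hdxpos]
      exact le_of_lt (hdx _ hbI _ haI h5)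
    have hballs : ∀ x ∈ Metric.ball (xbar (Q.pts k)) (3 * κ₃),
        DifferentiableAt ℝ (m (Q.pts (k + 1))) x ∧ DifferentiableAt ℝ (m (Q.pts k)) x ∧
        ‖fderiv ℝ (m (Q.pts (k + 1))) x - fderiv ℝ (m (Q.pts k)) x‖ ≤ (Mk k).toReal := by
      intro x hx
      rw [Metric.mem_ball] at hx
      have hxa : x ∈ Metric.ball (xbar (Q.pts k)) δ' := by
        rw [Metric.mem_ball]
        linarith [hκ₃δ, hδmpos, hδm']
      have hxb : x ∈ Metric.ball (xbar (Q.pts (k + 1))) δ' := by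
        rw [Metric.mem_ball]
        calc dist x (xbar (Q.pts (k + 1)))
            ≤ dist x (xbar (Q.pts k)) + dist (xbar (Q.pts k)) (xbar (Q.pts (k + 1))) :=
              dist_triangle _ _ _
          _ < 3 * κ₃ + κ₃ := by
              rw [dist_comm (xbar (Q.pts k))]
              linarith
          _ ≤ δ' := by linarith [hκ₃δ, hδmpos, hδm']
      have hda : DifferentiableAt ℝ (m (Q.pts k)) x :=
        ((hdiff _ haI).differentiableOn one_ne_zero).differentiableAt
          (Metric.isOpen_ball.mem_nhds hxa)
      have hdb : DifferentiableAt ℝ (m (Q.pts (k + 1))) x :=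
        ((hdiff _ hbI).differentiableOn one_ne_zero).differentiableAt
          (Metric.isOpen_ball.mem_nhds hxb)
      refine ⟨hdb, hda, ?_⟩
      have hmem := tubemem k hkr x (by linarith [hκ₃δ, hδmpos])
      have hedist : edist (fderiv ℝ (m (Q.pts (k + 1))) x) (fderiv ℝ (m (Q.pts k)) x) ≤ Mk k :=
        le_iSup₂
          (f := fun x (_ : x ∈ xbar '' Set.Icc (Q.pts k) (Q.pts (k + 1))
              + Metric.closedBall (0 : En n) δm) =>
            edist (fderiv ℝ (m (Q.pts (k + 1))) x) (fderiv ℝ (m (Q.pts k)) x)) x hmem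
      rw [← dist_eq_norm, dist_edist]
      exact ENNReal.toReal_mono (hMkne k (Finset.mem_range.mpr hkr)) hedist
    have hζ1b : ξ j (c1 k) ∈ Metric.ball (xbar (Q.pts k)) (3 * κ₃) := by
      rw [Metric.mem_ball]
      linarith [hκ₃pos]
    have hζ2b : ξ j' (c2 k) ∈ Metric.ball (xbar (Q.pts k)) (3 * κ₃) := by
      rw [Metric.mem_ball]
      linarith [hκ₃pos]
    have hmvt : ‖(m (Q.pts (k + 1)) (ξ j (c1 k)) - m (Q.pts k) (ξ j (c1 k)))
        - (m (Q.pts (k + 1)) (ξ j' (c2 k)) - m (Q.pts k) (ξ j' (c2 k)))‖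
        ≤ (Mk k).toReal * ‖ξ j (c1 k) - ξ j' (c2 k)‖ :=
      Convex.norm_image_sub_le_of_norm_fderiv_le (𝕜 := ℝ)
        (f := fun x => m (Q.pts (k + 1)) x - m (Q.pts k) x)
        (fun x hx => ((hballs x hx).1).sub (hballs x hx).2.1)
        (fun x hx => by
          rw [fderiv_fun_sub (hballs x hx).1 (hballs x hx).2.1]
          exact (hballs x hx).2.2)
        (convex_ball _ _) hζ2b hζ1b
    have hz12 : ‖ξ j (c1 k) - ξ j' (c2 k)‖ ≤ 4 * κ₃ := by
      rw [← dist_eq_norm]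
      calc dist (ξ j (c1 k)) (ξ j' (c2 k))
          ≤ dist (ξ j (c1 k)) (xbar (Q.pts k)) + dist (xbar (Q.pts k)) (ξ j' (c2 k)) :=
            dist_triangle _ _ _
        _ ≤ 4 * κ₃ := by
            rw [dist_comm (xbar (Q.pts k))]
            linarith
    have hMk0 : (0:ℝ) ≤ (Mk k).toReal := ENNReal.toReal_nonneg
    calc |⟪g ((P j).pts (c1 k)), m (Q.pts (k + 1)) (ξ j (c1 k)) - m (Q.pts k) (ξ j (c1 k))⟫_ℝ
          - ⟪g ((P j').pts (c2 k)), m (Q.pts (k + 1)) (ξ j' (c2 k)) - m (Q.pts k) (ξ j' (c2 k))⟫_ℝ|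
        = |⟪g ((P j).pts (c1 k)) - g ((P j').pts (c2 k)),
              m (Q.pts (k + 1)) (ξ j (c1 k)) - m (Q.pts k) (ξ j (c1 k))⟫_ℝ
            + ⟪g ((P j').pts (c2 k)),
              (m (Q.pts (k + 1)) (ξ j (c1 k)) - m (Q.pts k) (ξ j (c1 k)))
              - (m (Q.pts (k + 1)) (ξ j' (c2 k)) - m (Q.pts k) (ξ j' (c2 k)))⟫_ℝ| := by
          simp only [inner_sub_left, inner_sub_right]
          ring
      _ ≤ |⟪g ((P j).pts (c1 k)) - g ((P j').pts (c2 k)),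
              m (Q.pts (k + 1)) (ξ j (c1 k)) - m (Q.pts k) (ξ j (c1 k))⟫_ℝ|
          + |⟪g ((P j').pts (c2 k)),
              (m (Q.pts (k + 1)) (ξ j (c1 k)) - m (Q.pts k) (ξ j (c1 k)))
              - (m (Q.pts (k + 1)) (ξ j' (c2 k)) - m (Q.pts k) (ξ j' (c2 k)))⟫_ℝ| := abs_add_le _ _
      _ ≤ ‖g ((P j).pts (c1 k)) - g ((P j').pts (c2 k))‖
            * ‖m (Q.pts (k + 1)) (ξ j (c1 k)) - m (Q.pts k) (ξ j (c1 k))‖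
          + ‖g ((P j').pts (c2 k))‖
            * ‖(m (Q.pts (k + 1)) (ξ j (c1 k)) - m (Q.pts k) (ξ j (c1 k)))
              - (m (Q.pts (k + 1)) (ξ j' (c2 k)) - m (Q.pts k) (ξ j' (c2 k)))‖ :=
          add_le_add (abs_real_inner_le_norm _ _) (abs_real_inner_le_norm _ _)
      _ ≤ κ₁ * ‖m (Q.pts (k + 1)) (ξ j (c1 k)) - m (Q.pts k) (ξ j (c1 k))‖
          + (G * (4 * κ₃)) * (Mk k).toReal := by
          have t1 := mul_le_mul_of_nonneg_right hgd
            (norm_nonneg (m (Q.pts (k + 1)) (ξ j (c1 k)) - m (Q.pts k) (ξ j (c1 k))))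
          have t2 : ‖g ((P j').pts (c2 k))‖
              * ‖(m (Q.pts (k + 1)) (ξ j (c1 k)) - m (Q.pts k) (ξ j (c1 k)))
                - (m (Q.pts (k + 1)) (ξ j' (c2 k)) - m (Q.pts k) (ξ j' (c2 k)))‖
              ≤ G * ((Mk k).toReal * (4 * κ₃)) :=
            mul_le_mul (hG _ hτ2I)
              (le_trans hmvt (mul_le_mul_of_nonneg_left hz12 hMk0))
              (norm_nonneg _) hG0
          have t3 : G * ((Mk k).toReal * (4 * κ₃)) = (G * (4 * κ₃)) * (Mk k).toReal := by ring
          linarith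
  -- assemble
  rw [Real.dist_eq, hsum1, hsum2, ← Finset.sum_sub_distrib]
  refine lt_of_le_of_lt
    (le_trans (Finset.abs_sum_le_sum_abs _ _) (Finset.sum_le_sum key)) ?_
  rw [Finset.sum_add_distrib, ← Finset.mul_sum, ← Finset.mul_sum]
  have hfin1 : κ₁ * ∑ k ∈ Finset.range Q.N,
      ‖m (Q.pts (k + 1)) (ξ j (c1 k)) - m (Q.pts k) (ξ j (c1 k))‖ ≤ κ₁ * C1 :=
    mul_le_mul_of_nonneg_left hDsum (le_of_lt hκ₁pos)
  have hfin2 : (G * (4 * κ₃)) * ∑ k ∈ Finset.range Q.N, (Mk k).toReal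
      ≤ (G * (4 * κ₃)) * C2 :=
    mul_le_mul_of_nonneg_left hMkR (mul_nonneg hG0 (by positivity))
  have hk1 : κ₁ * C1 ≤ ε / 4 := by nlinarith [hκ₁pos, hκ₁C]
  have hk2 : (G * (4 * κ₃)) * C2 ≤ ε / 4 := by
    have s1 : (G * (4 * κ₃)) * C2 ≤ 4 * κ₃ * ((G + 1) * (C2 + 1)) := by
      nlinarith [hκ₃pos.le, hG0, hC2]
    linarith [hκ₃C]
  linarith

end
end
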